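/- arXiv:2110.07946 — 9 statements merged into one kernel-verified Lean document; each statement's English description precedes it below -/
import Mathlib

section
/- The quartic polynomial g(t) = (3 - 6a)t^4 + 4b t^3 + 6a t^2 + 1 is nonnegative for all real t if and only if a ≥ -1 and b^2 ≤ 1 - 2a^3 - 3a^2. -/
lemma aux_suff (a b : ℝ) (ha : -1 ≤ a) (hb0 : 0 ≤ b)
    (hb : b^2 ≤ (1+a)^2*(1-2*a)) :
    ∀ t : ℝ, 0 ≤ (3 - 6*a)*t^4 + 4*b*t^3 + 6*a*t^2 + 1 := by
  have h12 : 0 ≤ 1 - 2*a := by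
    by_contra h
    push_neg at h
    nlinarith [sq_nonneg b, mul_pos (show (0:ℝ) < (1+a)^2 by nlinarith) (show (0:ℝ) < 2*a-1 by linarith)]
  set L := Real.sqrt (max 0 (-3*a)) with hLdef
  set R := Real.sqrt (1-2*a) with hRdef
  have hL0 : 0 ≤ L := Real.sqrt_nonneg _
  have hR0 : 0 ≤ R := Real.sqrt_nonneg _
  have hL2 : L^2 = max 0 (-3*a) := Real.sq_sqrt (le_max_left _ _)
  have hR2 : R^2 = 1-2*a := Real.sq_sqrt h12
  have hLR : L ≤ R := by
    apply Real.sqrt_le_sqrt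
    apply max_le h12
    linarith
  have hfL : L^3 + 3*a*L = 0 := by
    rcases le_or_gt a 0 with h | h
    · have : L^2 = -3*a := by rw [hL2, max_eq_right]; linarith
      nlinarith [this]
    · have : L = 0 := by
        rw [hLdef, show max 0 (-3*a) = 0 by rw [max_eq_left]; linarith, Real.sqrt_zero]
      rw [this]; ring
  have hfR : R^3 + 3*a*R = (1+a)*R := by nlinarith [hR2]
  have hbR : b ≤ (1+a)*R := by
    nlinarith [sq_nonneg (b - (1+a)*R), sq_nonneg (b + (1+a)*R),
      mul_nonneg (by linarith : (0:ℝ) ≤ 1+a) hR0, hR2]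
  have hcont : ContinuousOn (fun r : ℝ => r^3 + 3*a*r) (Set.Icc L R) := by
    apply Continuous.continuousOn; continuity
  have hmem : b ∈ Set.Icc ((fun r : ℝ => r^3 + 3*a*r) L) ((fun r : ℝ => r^3 + 3*a*r) R) := by
    simp only [Set.mem_Icc]
    constructor
    · simpa [hfL] using hb0
    · simpa [hfR] using hbR
  obtain ⟨r, hrmem, hreq⟩ := intermediate_value_Icc hLR hcont hmem
  simp only [Set.mem_Icc] at hrmem
  obtain ⟨hrL, hrR⟩ := hrmem
  have hr0 : 0 ≤ r := le_trans hL0 hrL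
  have hr2R : r^2 ≤ 1-2*a := by nlinarith [hR2]
  have hr2L : 0 ≤ r^2 + 3*a := by
    have h1 : L^2 ≤ r^2 := by nlinarith
    have h2 : -3*a ≤ L^2 := by rw [hL2]; exact le_max_right _ _
    linarith
  have hbeq : r^3 + 3*a*r = b := hreq
  clear hb hb0 hbR hfL hfR hLR hL0 hR0 hL2 hR2 hrL hrR hreq hcont hmem hLdef hRdef
  clear L R
  intro t
  have hs : 0 ≤ 6*a + 3*r^2 := by nlinarith [sq_nonneg r]
  have hQ : 0 ≤ (6*a+3*r^2)*t^2 - 2*r*t + 1 := by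
    rcases hs.eq_or_lt with h | h
    · have hr2z : r^2 ≤ 0 := by linarith
      have h6 : (6*a+3*r^2)*t^2 = 0 := by rw [← h]; ring
      have hrt : (r*t)^2 ≤ 0 := by nlinarith [sq_nonneg t]
      nlinarith [h6, hrt, sq_nonneg (2*r*t-1)]
    · nlinarith [sq_nonneg ((6*a+3*r^2)*t - r), h, hr2L]
  have hC : 0 ≤ 3*(1+r^2)*(1-2*a-r^2) := by
    apply mul_nonneg
    · nlinarith [sq_nonneg r]
    · linarith
  have key : (3-6*a)*t^4 + 4*b*t^3 + 6*a*t^2 + 1 =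
      (1+r*t)^2*((6*a+3*r^2)*t^2 - 2*r*t + 1) + (3*(1+r^2)*(1-2*a-r^2))*t^4 := by
    rw [← hbeq]; ring
  rw [show (3 - 6*a)*t^4 + 4*b*t^3 + 6*a*t^2 + 1 = (3-6*a)*t^4 + 4*b*t^3 + 6*a*t^2 + 1 from by ring, key]
  have ht4 : (0:ℝ) ≤ t^4 := by positivity
  exact add_nonneg (mul_nonneg (sq_nonneg _) hQ) (mul_nonneg hC ht4)


lemma nec_a (a b : ℝ) (hg : ∀ t : ℝ, 0 ≤ (3 - 6*a)*t^4 + 4*b*t^3 + 6*a*t^2 + 1) :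
    -1 ≤ a := by
  by_contra h
  push_neg at h
  have hd : (0:ℝ) < 3 - 6*a := by linarith
  set u : ℝ := (-3*a)/(3-6*a) with hu
  have hu0 : 0 ≤ u := by rw [hu]; apply div_nonneg <;> linarith
  have hueq : (3-6*a)*u = -3*a := by rw [hu]; field_simp; try ring
  set t := Real.sqrt u with htdef
  have ht2 : t^2 = u := Real.sq_sqrt hu0
  have ht4 : t^4 = u^2 := by rw [show t^4 = (t^2)^2 from by ring, ht2]
  have h1 := hg t
  have h2 := hg (-t)
  have key : 0 ≤ (3-6*a)*u^2 + 6*a*u + 1 := by nlinarith [h1, h2, ht2, ht4]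
  have hsq : ((3-6*a)*u)^2 = (-3*a)^2 := by rw [hueq]
  have hau : a*((3-6*a)*u) = a*(-3*a) := by rw [hueq]
  nlinarith [mul_nonneg hd.le key, hsq, hau,
    mul_pos (show (0:ℝ) < -1-a by linarith) (show (0:ℝ) < 1-3*a by linarith)]

lemma nec_a2 (a b : ℝ) (hg : ∀ t : ℝ, 0 ≤ (3 - 6*a)*t^4 + 4*b*t^3 + 6*a*t^2 + 1) :
    0 ≤ 1 - 2*a := by
  by_contra h
  push_neg at h
  have hd : (0:ℝ) < 6*a - 3 := by linarith
  set u : ℝ := (6*a+2)/(6*a-3) with hu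
  have hu0 : 0 ≤ u := by rw [hu]; apply div_nonneg <;> linarith
  have hueq : (6*a-3)*u = 6*a+2 := by rw [hu]; field_simp; try ring
  set t := Real.sqrt u with htdef
  have ht2 : t^2 = u := Real.sq_sqrt hu0
  have ht4 : t^4 = u^2 := by rw [show t^4 = (t^2)^2 from by ring, ht2]
  have h1 := hg t
  have h2 := hg (-t)
  have key : 0 ≤ (3-6*a)*u^2 + 6*a*u + 1 := by nlinarith [h1, h2, ht2, ht4]
  have hsq : ((6*a-3)*u)^2 = (6*a+2)^2 := by rw [hueq]
  have hau : a*((6*a-3)*u) = a*(6*a+2) := by rw [hueq]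
  nlinarith [mul_nonneg hd.le key, hsq, hau]

lemma nec_b (a b : ℝ) (hg : ∀ t : ℝ, 0 ≤ (3 - 6*a)*t^4 + 4*b*t^3 + 6*a*t^2 + 1) :
    b ≤ (1+a) * Real.sqrt (1-2*a) := by
  have h12 : 0 ≤ 1 - 2*a := nec_a2 a b hg
  have ha : -1 ≤ a := nec_a a b hg
  set r := Real.sqrt (1-2*a) with hrdef
  have hr0 : 0 ≤ r := Real.sqrt_nonneg _
  have hr2 : r^2 = 1-2*a := Real.sq_sqrt h12
  rcases hr0.eq_or_lt with h | h
  · -- r = 0, so a = 1/2; show b ≤ 0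
    have hr2z : r^2 = 0 := by rw [← h]; ring
    have ha12 : a = 1/2 := by linarith [hr2, hr2z]
    have hble : b ≤ 0 := by
      by_contra hb
      push_neg at hb
      set t : ℝ := -(1+b^2)/b with htdef
      have h1 := hg t
      have hne : b ≠ 0 := ne_of_gt hb
      have hexp : ((3-6*a)*t^4 + 4*b*t^3 + 6*a*t^2 + 1) * b^2
          = -4*(1+b^2)^3 + 3*(1+b^2)^2 + b^2 := by
        rw [htdef, ha12]; field_simp; ring
      nlinarith [mul_nonneg h1 (sq_nonneg b), hexp, sq_nonneg b, sq_nonneg (b^2), sq_nonneg (b^3)]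
    rw [← h, mul_zero]
    exact hble
  · -- r > 0
    have h1 := hg (-1/r)
    have hrne : r ≠ 0 := ne_of_gt h
    have hexp : ((3-6*a)*(-1/r)^4 + 4*b*(-1/r)^3 + 6*a*(-1/r)^2 + 1) * r^4
        = (3-6*a) - 4*b*r + 6*a*r^2 + r^4 := by
      field_simp; ring
    have h4 : 0 ≤ (3-6*a) - 4*b*r + 6*a*r^2 + r^4 := by
      rw [← hexp]
      exact mul_nonneg h1 (by positivity)
    have hr4 : r^4 = (1-2*a)^2 := by rw [show r^4 = (r^2)^2 from by ring, hr2]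
    have har2 : a*r^2 = a*(1-2*a) := by rw [hr2]
    nlinarith [h4, hr2, hr4, har2, h]

theorem stmt_0 (a b : ℝ) :
    (∀ t : ℝ, 0 ≤ (3 - 6*a)*t^4 + 4*b*t^3 + 6*a*t^2 + 1) ↔
      (a ≥ -1 ∧ b^2 ≤ 1 - 2*a^3 - 3*a^2) := by
  constructor
  · intro hg
    have ha := nec_a a b hg
    have h12 := nec_a2 a b hg
    refine ⟨ha, ?_⟩
    have hb1 := nec_b a b hg
    have hb2 : -b ≤ (1+a) * Real.sqrt (1-2*a) := by
      apply nec_b a (-b)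
      intro t
      have h := hg (-t)
      nlinarith [h]
    have hbsq : b^2 ≤ ((1+a) * Real.sqrt (1-2*a))^2 := sq_le_sq' (by linarith) hb1
    have hs : (Real.sqrt (1-2*a))^2 = 1-2*a := Real.sq_sqrt h12
    have hM : ((1+a) * Real.sqrt (1-2*a))^2 = (1+a)^2*(1-2*a) := by
      rw [mul_pow, hs]
    nlinarith [hbsq, hM]
  · rintro ⟨ha, hb⟩
    have hb' : b^2 ≤ (1+a)^2*(1-2*a) := by nlinarith [hb]
    rcases le_total 0 b with h | h
    · exact aux_suff a b ha h hb'
    · intro t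
      have h2 := aux_suff a (-b) ha (by linarith) (by nlinarith [hb']) (-t)
      nlinarith [h2]
end

section
/- A homogeneous cubic p(x1,x2) = x1^3 + 3a x1 x2^2 + b x2^3 satisfies p(x) ≤ 1 for all (x1,x2) with x1^2 + x2^2 = 1 if and only if a ≥ -1 and b^2 ≤ 1 - 2a^3 - 3a^2. -/
set_option maxHeartbeats 1000000

theorem stmt_1 (a b : ℝ) :
    (∀ x1 x2 : ℝ, x1^2 + x2^2 = 1 → x1^3 + 3*a*x1*x2^2 + b*x2^3 ≤ 1) ↔
      (a ≥ -1 ∧ b^2 ≤ 1 - 2*a^3 - 3*a^2) := by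
  constructor
  · intro H
    have key : ∀ t : ℝ, t^2 ≤ 1 →
        |b| * Real.sqrt (1-t^2) ^ 3 ≤ 1 - t^3 - 3*a*t*(1-t^2) := by
      intro t ht
      have hs0 : (0:ℝ) ≤ Real.sqrt (1-t^2) := Real.sqrt_nonneg _
      have hs2 : Real.sqrt (1-t^2) ^ 2 = 1 - t^2 := Real.sq_sqrt (by linarith)
      set s := Real.sqrt (1-t^2) with hsdef
      have e : 3*a*t*(1-t^2) = 3*a*t*s^2 := by rw [hs2]
      rw [e]
      rcases le_or_gt 0 b with hb | hb
      · have h1 := H t s (by nlinarith)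
        rw [abs_of_nonneg hb]
        linarith [h1]
      · have h1 := H t (-s) (by nlinarith)
        rw [abs_of_neg hb]
        have e2 : t^3 + 3*a*t*(-s)^2 + b*(-s)^3 = t^3 + 3*a*t*s^2 - b*s^3 := by ring
        rw [e2] at h1
        linarith [h1]
    have habs : (0:ℝ) ≤ |b| := abs_nonneg b
    have hA : a ≥ -1 := by
      have h1 := key (-1/2) (by norm_num)
      have hs0 : (0:ℝ) ≤ Real.sqrt (1-(-1/2:ℝ)^2) := Real.sqrt_nonneg _
      nlinarith [mul_nonneg habs (pow_nonneg hs0 3)]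
    refine ⟨hA, ?_⟩
    rcases lt_trichotomy a (1/2) with hc | hc | hc
    · -- main case a < 1/2 : use t* = a/(1-a)
      have hu : (0:ℝ) < 1 - a := by linarith
      have hne : (1-a) ≠ 0 := ne_of_gt hu
      set t := a/(1-a) with htdef
      have ht2 : t^2 ≤ 1 := by
        rw [htdef, div_pow, div_le_one (by positivity)]
        nlinarith
      have h1 := key t ht2
      have hs0 : (0:ℝ) ≤ Real.sqrt (1-t^2) := Real.sqrt_nonneg _
      have hs2 : Real.sqrt (1-t^2) ^ 2 = 1 - t^2 := by
        apply Real.sq_sqrt; linarith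
      set s := Real.sqrt (1-t^2) with hsdef
      have hgval : 1 - t^3 - 3*a*t*(1-t^2) = (1+a)*(1-2*a)^2/(1-a)^3 := by
        rw [htdef]; field_simp; ring
      have hsval : s^2 = (1-2*a)/(1-a)^2 := by
        rw [hs2, htdef]; field_simp; ring
      have hsq : b^2 * (s^2)^3 ≤ (1 - t^3 - 3*a*t*(1-t^2))^2 := by
        have e : (|b| * s^3)^2 = b^2 * (s^2)^3 := by
          rw [mul_pow, sq_abs]; ring
        rw [← e]
        have h2 : 0 ≤ |b| * s^3 := mul_nonneg habs (pow_nonneg hs0 3)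
        nlinarith [h1, h2]
      rw [hsval, hgval] at hsq
      have h12 : (0:ℝ) < 1 - 2*a := by linarith
      have hp6 : (0:ℝ) < (1-a)^6 := by positivity
      have key2 : b^2 * (1-2*a)^3 ≤ (1+a)^2 * (1-2*a)^4 := by
        have hne6 : ((1-a):ℝ)^6 ≠ 0 := by positivity
        have e1 : b^2 * ((1-2*a)/(1-a)^2)^3 * (1-a)^6 = b^2*(1-2*a)^3 := by
          rw [div_pow, (by ring : (((1-a):ℝ)^2)^3 = (1-a)^6), mul_assoc,
            div_mul_cancel₀ _ hne6]
        have e2 : ((1+a)*(1-2*a)^2/(1-a)^3)^2 * (1-a)^6 = (1+a)^2*(1-2*a)^4 := by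
          rw [div_pow, (by ring : (((1-a):ℝ)^3)^2 = (1-a)^6), div_mul_cancel₀ _ hne6]
          ring
        calc b^2*(1-2*a)^3 = b^2 * ((1-2*a)/(1-a)^2)^3 * (1-a)^6 := e1.symm
          _ ≤ ((1+a)*(1-2*a)^2/(1-a)^3)^2 * (1-a)^6 :=
              mul_le_mul_of_nonneg_right hsq hp6.le
          _ = (1+a)^2*(1-2*a)^4 := e2
      nlinarith [key2, pow_pos h12 3, mul_pos (mul_pos h12 h12) h12]
    · -- a = 1/2 : show b = 0
      have h0 : (1:ℝ) - 2*a^3 - 3*a^2 = 0 := by rw [hc]; norm_num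
      rw [h0]
      by_contra hpos
      push_neg at hpos
      have hb2 : 0 < b^2 := by positivity
      set ε := min 1 (2*b^2/9) with hε
      have hε0 : 0 < ε := lt_min one_pos (by positivity)
      have hε1 : ε ≤ 1 := min_le_left _ _
      have hεb : ε ≤ 2*b^2/9 := min_le_right _ _
      clear_value ε
      set t := 1 - ε with ht
      have ht2 : t^2 ≤ 1 := by nlinarith
      have h1 := key t ht2
      have hs0 : (0:ℝ) ≤ Real.sqrt (1-t^2) := Real.sqrt_nonneg _
      have hs2 : Real.sqrt (1-t^2) ^ 2 = 1 - t^2 := Real.sq_sqrt (by nlinarith)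
      set s := Real.sqrt (1-t^2) with hsdef
      have hsq : b^2 * (s^2)^3 ≤ (1 - t^3 - 3*a*t*(1-t^2))^2 := by
        have e : (|b| * s^3)^2 = b^2 * (s^2)^3 := by
          rw [mul_pow, sq_abs]; ring
        rw [← e]
        have h2 : 0 ≤ |b| * s^3 := mul_nonneg habs (pow_nonneg hs0 3)
        nlinarith [h1, h2]
      rw [hs2, ht, hc] at hsq
      have h12 : ε^3*(b^2*(2-ε)^3) ≤ ε^3*(ε*(3-ε)^2/4) := by
        have e : ε^3*(b^2*(2-ε)^3) = b^2 * (1 - (1 - ε) ^ 2) ^ 3 := by ring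
        have e' : ε^3*(ε*(3-ε)^2/4)
            = (1 - (1 - ε) ^ 3 - 3 * (1/2:ℝ) * (1 - ε) * (1 - (1 - ε) ^ 2)) ^ 2 := by ring
        rw [e, e']; exact hsq
      have h10 : b^2*(2-ε)^3 ≤ ε*(3-ε)^2/4 := le_of_mul_le_mul_left h12 (pow_pos hε0 3)
      have h13 : (1:ℝ) ≤ (2-ε)^3 := by nlinarith
      have h14 : b^2 ≤ b^2*(2-ε)^3 := by nlinarith [hb2.le, h13]
      have h16 : (3-ε)^2 ≤ 9 := by nlinarith
      have h15 : ε*(3-ε)^2 ≤ 9*ε := by nlinarith [hε0.le, h16]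
      linarith
    · -- a > 1/2 : contradiction
      exfalso
      have hu : (0:ℝ) < 3*a - 1 := by linarith
      have hne : (3*a-1) ≠ 0 := ne_of_gt hu
      set t := a/(3*a-1) with htdef
      have ht2 : t^2 ≤ 1 := by
        rw [htdef, div_pow, div_le_one (by positivity)]
        nlinarith
      have h1 := key t ht2
      have hs0 : (0:ℝ) ≤ Real.sqrt (1-t^2) := Real.sqrt_nonneg _
      have hgval : 1 - t^3 - 3*a*t*(1-t^2) = -(2*a-1)^3/(3*a-1)^2 := by
        have ht : t*(3*a-1) = a := div_mul_cancel₀ a hne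
        rw [eq_div_iff (by positivity)]
        linear_combination (-t^2*(3*a-1) - a*t - 3*a*(3*a-1) + 3*a*t^2*(3*a-1) + 3*a^2*t + a^2) * ht
      rw [hgval] at h1
      have h2 : 0 ≤ |b| * Real.sqrt (1-t^2)^3 := mul_nonneg habs (pow_nonneg hs0 3)
      have h3 : -(2*a-1)^3/(3*a-1)^2 < 0 := by
        apply div_neg_of_neg_of_pos
        · have h4 : (0:ℝ) < (2*a-1)^3 := pow_pos (by linarith) 3
          linarith
        · positivity
      linarith
  · rintro ⟨ha, hb⟩ x1 x2 hx
    have ha2 : a ≤ 1/2 := by nlinarith [sq_nonneg b, sq_nonneg (1+a)]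
    have hx2 : x2^2 = 1 - x1^2 := by linarith
    have ht1 : x1 ≤ 1 := by nlinarith [sq_nonneg x2]
    have htm : -1 ≤ x1 := by nlinarith [sq_nonneg x2]
    have hR : 0 ≤ 2*(1-a)*x1^2 + 4*x1 + (3+2*a) := by
      nlinarith [sq_nonneg (2*(1-a)*x1+2), sq_nonneg (1+a)]
    have hh : 0 ≤ (1-3*a)*(x1^2+x1) + 1 := by
      nlinarith [sq_nonneg (x1 + 1/2), sq_nonneg (1-x1)]
    have hg : 0 ≤ 1 - x1^3 - 3*a*x1*(1-x1^2) := by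
      have e : 1 - x1^3 - 3*a*x1*(1-x1^2) = (1-x1) * ((1-3*a)*(x1^2+x1)+1) := by ring
      rw [e]; exact mul_nonneg (by linarith) hh
    have h5 : 0 ≤ ((1-a)*x1-a)^2 * (2*(1-a)*x1^2 + 4*x1 + (3+2*a)) :=
      mul_nonneg (sq_nonneg _) hR
    have h6 : 0 ≤ (1 - 2*a^3 - 3*a^2 - b^2) * ((1-x1)*(1+x1)^3) := by
      apply mul_nonneg (by linarith)
      exact mul_nonneg (by linarith) (pow_nonneg (by linarith) 3)
    have h7 : 0 ≤ ((1-3*a)*(x1^2+x1)+1)^2 - b^2*(1-x1)*(1+x1)^3 := by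
      have e : ((1-3*a)*(x1^2+x1)+1)^2 - b^2*(1-x1)*(1+x1)^3
          = ((1-a)*x1-a)^2 * (2*(1-a)*x1^2 + 4*x1 + (3+2*a))
            + (1 - 2*a^3 - 3*a^2 - b^2) * ((1-x1)*(1+x1)^3) := by ring
      rw [e]; linarith
    have h8 : 0 ≤ (1-x1)^2 * (((1-3*a)*(x1^2+x1)+1)^2 - b^2*(1-x1)*(1+x1)^3) :=
      mul_nonneg (sq_nonneg _) h7
    have hkey : b^2 * (1-x1^2)^3 ≤ (1 - x1^3 - 3*a*x1*(1-x1^2))^2 := by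
      nlinarith [h8]
    have hbx : b * x2^3 ≤ 1 - x1^3 - 3*a*x1*(1-x1^2) := by
      have e : (b*x2^3)^2 = b^2 * (x2^2)^3 := by ring
      have h9 : (b*x2^3)^2 ≤ (1 - x1^3 - 3*a*x1*(1-x1^2))^2 := by
        rw [e, hx2]; exact hkey
      nlinarith [hg, h9]
    nlinarith [hbx, hx2]
end

section
/- For real parameters a ≤ 1/2 and b, there exists α ∈ ℝ such that the symmetric 3×3 matrix M(α) with rows (3-6a, 2b, α), (2b, 6a-2α, 0), (α, 0, 1) is positive semidefinite if and only if M(2a-1) is positive semidefinite. -/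
theorem stmt_2 (a b : ℝ) (ha : a ≤ 1/2) :
    (∃ α : ℝ, (!![3 - 6*a, 2*b, α; 2*b, 6*a - 2*α, 0; α, 0, 1] : Matrix (Fin 3) (Fin 3) ℝ).PosSemidef) ↔
      (!![3 - 6*a, 2*b, 2*a - 1; 2*b, 6*a - 2*(2*a - 1), 0; 2*a - 1, 0, 1] : Matrix (Fin 3) (Fin 3) ℝ).PosSemidef := by
  constructor
  · rintro ⟨α, h⟩
    have k1 := h.dotProduct_mulVec_nonneg ![0, 1, 0]
    have k2 := h.dotProduct_mulVec_nonneg ![1, 0, -α]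
    have k3 := h.dotProduct_mulVec_nonneg ![6*a-2*α, -2*b, -α*(6*a-2*α)]
    have k4 := h.dotProduct_mulVec_nonneg ![2*b, -(3-6*a)-1, 0]
    simp [dotProduct, Matrix.mulVec, Fin.sum_univ_three] at k1 k2 k3 k4
    -- basic scalar facts
    have hb : 4*b^2 ≤ (6*a-2*α)*(3-6*a-α^2) := by
      rcases eq_or_lt_of_le k1 with heq | hlt
      · -- 6a = 2α : then (2,2)-entry is 0 and b must vanish
        have hα : α = 3*a := by linarith
        subst hα
        nlinarith [k4, sq_nonneg b, ha]
      · nlinarith [k3, sq_nonneg b]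
    have ha1 : -1 ≤ a := by nlinarith [k1, k2, sq_nonneg (3*a - α), sq_nonneg (3*a + α)]
    have hD : 4*b^2 ≤ (2*a+2)*(2-2*a-4*a^2) := by
      nlinarith [hb, mul_nonneg (sq_nonneg (α-(2*a-1))) (show (0:ℝ) ≤ 2-a-α by linarith)]
    refine Matrix.PosSemidef.of_dotProduct_mulVec_nonneg ?_ ?_
    · ext i j
      fin_cases i <;> fin_cases j <;> simp
    · intro x
      simp [dotProduct, Matrix.mulVec, Fin.sum_univ_three]
      rcases eq_or_lt_of_le ha1 with heq | hlt
      · have hb0 : b = 0 := by nlinarith [sq_nonneg b]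
        have haa : a = -1 := heq.symm
        subst haa
        subst hb0
        nlinarith [sq_nonneg (3*(x 0) - x 2)]
      · have hpos : (0:ℝ) < 2*a+2 := by linarith
        nlinarith [mul_nonneg hpos.le (sq_nonneg (x 2 + (2*a-1)*(x 0))),
          sq_nonneg ((2*a+2)*(x 1) + 2*b*(x 0)),
          mul_nonneg (by linarith : (0:ℝ) ≤ (2*a+2)*(2-2*a-4*a^2) - 4*b^2) (sq_nonneg (x 0)),
          hpos]
  · intro h
    exact ⟨2*a-1, h⟩
end

section
/- For every τ ∈ [-√3/2, √3/2], the pair (a, b) = ((1-4τ^2)/2, 3τ - 4τ^3) satisfies a ≥ -1 and b^2 = 1 - 2a^3 - 3a^2. In particular the cubic p(x) = x1^3 + (3/2)(1-4τ^2) x1 x2^2 + (3τ - 4τ^3) x2^3 lies on the boundary of the set of cubics bounded by 1 on the unit circle. -/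
theorem stmt_3 (τ : ℝ) (hτ : τ ∈ Set.Icc (-(Real.sqrt 3)/2) (Real.sqrt 3/2)) :
    ((1 - 4*τ^2)/2 ≥ -1 ∧ (3*τ - 4*τ^3)^2 = 1 - 2*((1 - 4*τ^2)/2)^3 - 3*((1 - 4*τ^2)/2)^2) ∧
    (∀ x1 x2 : ℝ, x1^2 + x2^2 = 1 →
      x1^3 + (3/2)*(1 - 4*τ^2)*x1*x2^2 + (3*τ - 4*τ^3)*x2^3 ≤ 1) ∧
    (∃ x1 x2 : ℝ, x1^2 + x2^2 = 1 ∧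
      x1^3 + (3/2)*(1 - 4*τ^2)*x1*x2^2 + (3*τ - 4*τ^3)*x2^3 = 1) := by
  obtain ⟨h1, h2⟩ := hτ
  have hs3 : Real.sqrt 3 ^ 2 = 3 := Real.sq_sqrt (by norm_num)
  have ht2 : τ^2 ≤ 3/4 := by nlinarith [Real.sqrt_nonneg 3]
  refine ⟨⟨by nlinarith, by ring⟩, ?_, ⟨1, 0, by norm_num, by norm_num⟩⟩
  intro x y h
  have hx1 : 1 - x ≥ 0 := by nlinarith [sq_nonneg y]
  have hz : x^2 + y^2 - 1 = 0 := by linarith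
  have hc : 1 + 4*τ^2 - (1 - 4*τ^2)*x - 4*τ*y ≥ 0 := by
    have hzz : (1 + 4*τ^2)^2 * (x^2 + y^2 - 1) = 0 := by rw [hz]; ring
    nlinarith [sq_nonneg (1 + 4*τ^2 - ((1 - 4*τ^2)*x + 4*τ*y)),
      sq_nonneg ((1 - 4*τ^2)*y - 4*τ*x), hzz, sq_nonneg τ]
  have hd : 1 + x/2 + τ*y ≥ 0 := by
    nlinarith [sq_nonneg (1 + x/2 + τ*y), sq_nonneg (τ*x - y/2)]
  have key : 1 - (x^3 + (3/2)*(1 - 4*τ^2)*x*y^2 + (3*τ - 4*τ^3)*y^3) =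
      (1 - x) * (1 + 4*τ^2 - (1 - 4*τ^2)*x - 4*τ*y) * (1 + x/2 + τ*y)
      + (4*τ^3*y - 3*τ*y + 2*τ^2*x - (3/2)*x + 4*τ^2) * (x^2 + y^2 - 1) := by
    ring
  have hzz : (4*τ^3*y - 3*τ*y + 2*τ^2*x - (3/2)*x + 4*τ^2) * (x^2 + y^2 - 1) = 0 := by
    rw [hz]; ring
  nlinarith [mul_nonneg (mul_nonneg hx1 hc) hd, key, hzz]
end

section
/- Let p be a homogeneous cubic on ℝ^2 with max over the unit circle equal to 1, and suppose p has at least three distinct global maxima on S^1. Then p has exactly three global maxima on S^1 and they are equally spaced (pairwise at angle 2π/3); moreover p(x) = cos(3(φ - φ0)) in polar coordinates for some φ0. -/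
open Complex in
lemma key1 (a1 a2 b1 b2 c s : ℝ) (hC : (c:ℂ)^2 + (s:ℂ)^2 = 1) :
    (-((a1:ℂ) - a2*I)/2) * ((c:ℂ)+s*I)^6 + (-((b1:ℂ) - b2*I)/2) * ((c:ℂ)+s*I)^4
      + ((c:ℂ)+s*I)^3 + (-((b1:ℂ)+b2*I)/2)*((c:ℂ)+s*I)^2 + (-((a1:ℂ)+a2*I)/2)
    = ((c:ℂ)+s*I)^3 * (1 - ((a1:ℂ)*(4*c^3-3*c) + a2*(3*s-4*s^3) + b1*c + b2*s)) := by
  have hI : Complex.I^2 = -1 := Complex.I_sq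
  linear_combination (((1:ℂ)/2)*(a2:ℂ)*Complex.I + ((1:ℂ)/2)*(a1:ℂ) + ((-1:ℂ)/2)*(s:ℂ)^2*(b2:ℂ)*Complex.I + ((-1:ℂ)/2)*(s:ℂ)^2*(b1:ℂ) + ((1:ℂ)/2)*(s:ℂ)^2*(a2:ℂ)*Complex.I + ((1:ℂ)/2)*(s:ℂ)^2*(a1:ℂ) + ((7:ℂ)/2)*(s:ℂ)^4*(a2:ℂ)*Complex.I + ((1:ℂ)/2)*(s:ℂ)^4*(a1:ℂ) + (-1:ℂ)*(c:ℂ)*(s:ℂ)*(b2:ℂ) + (1:ℂ)*(c:ℂ)*(s:ℂ)*(b1:ℂ)*Complex.I + (9:ℂ)*(c:ℂ)*(s:ℂ)^3*(a2:ℂ) + (-3:ℂ)*(c:ℂ)*(s:ℂ)^3*(a1:ℂ)*Complex.I + ((1:ℂ)/2)*(c:ℂ)^2*(b2:ℂ)*Complex.I + ((1:ℂ)/2)*(c:ℂ)^2*(b1:ℂ) + ((1:ℂ)/2)*(c:ℂ)^2*(a2:ℂ)*Complex.I + ((1:ℂ)/2)*(c:ℂ)^2*(a1:ℂ) + (-8:ℂ)*(c:ℂ)^2*(s:ℂ)^2*(a2:ℂ)*Complex.I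 + (-8:ℂ)*(c:ℂ)^2*(s:ℂ)^2*(a1:ℂ) + (-3:ℂ)*(c:ℂ)^3*(s:ℂ)*(a2:ℂ) + (9:ℂ)*(c:ℂ)^3*(s:ℂ)*(a1:ℂ)*Complex.I + ((1:ℂ)/2)*(c:ℂ)^4*(a2:ℂ)*Complex.I + ((7:ℂ)/2)*(c:ℂ)^4*(a1:ℂ)) * hC + (((-1:ℂ)/2)*(s:ℂ)^2*(b2:ℂ)*Complex.I + ((-1:ℂ)/2)*(s:ℂ)^2*(b1:ℂ) + ((1:ℂ)/2)*(s:ℂ)^4*(b2:ℂ)*Complex.I + ((1:ℂ)/2)*(s:ℂ)^4*(b2:ℂ)*Complex.I^3 + ((1:ℂ)/2)*(s:ℂ)^4*(b1:ℂ) + ((-1:ℂ)/2)*(s:ℂ)^4*(b1:ℂ)*Complex.I^2 + (3:ℂ)*(s:ℂ)^4*(a2:ℂ)*Complex.I + ((-7:ℂ)/2)*(s:ℂ)^6*(a2:ℂ)*Complex.I + ((-1:ℂ)/2)*(s:ℂ)^6*(a2:ℂ)*Complex.I^3 + ((1:ℂ)/2)*(s:ℂ)^6*(a2:ℂ)*Complex.I^5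 + ((-1:ℂ)/2)*(s:ℂ)^6*(a1:ℂ) + ((1:ℂ)/2)*(s:ℂ)^6*(a1:ℂ)*Complex.I^2 + ((-1:ℂ)/2)*(s:ℂ)^6*(a1:ℂ)*Complex.I^4 + (-1:ℂ)*(c:ℂ)*(s:ℂ)*(b2:ℂ) + (1:ℂ)*(c:ℂ)*(s:ℂ)^3*(b2:ℂ) + (2:ℂ)*(c:ℂ)*(s:ℂ)^3*(b2:ℂ)*Complex.I^2 + (-1:ℂ)*(c:ℂ)*(s:ℂ)^3*(b1:ℂ)*Complex.I + (9:ℂ)*(c:ℂ)*(s:ℂ)^3*(a2:ℂ) + (-3:ℂ)*(c:ℂ)*(s:ℂ)^3*(a1:ℂ)*Complex.I + (-9:ℂ)*(c:ℂ)*(s:ℂ)^5*(a2:ℂ) + (-3:ℂ)*(c:ℂ)*(s:ℂ)^5*(a2:ℂ)*Complex.I^2 + (3:ℂ)*(c:ℂ)*(s:ℂ)^5*(a2:ℂ)*Complex.I^4 + (3:ℂ)*(c:ℂ)*(s:ℂ)^5*(a1:ℂ)*Complex.I + (-3:ℂ)*(c:ℂ)*(s:ℂ)^5*(a1:ℂ)*Complex.I^3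 + (3:ℂ)*(c:ℂ)^2*(s:ℂ)^2*(b2:ℂ)*Complex.I + (-9:ℂ)*(c:ℂ)^2*(s:ℂ)^2*(a1:ℂ) + ((-15:ℂ)/2)*(c:ℂ)^2*(s:ℂ)^4*(a2:ℂ)*Complex.I + ((15:ℂ)/2)*(c:ℂ)^2*(s:ℂ)^4*(a2:ℂ)*Complex.I^3 + ((15:ℂ)/2)*(c:ℂ)^2*(s:ℂ)^4*(a1:ℂ) + ((-15:ℂ)/2)*(c:ℂ)^2*(s:ℂ)^4*(a1:ℂ)*Complex.I^2 + (2:ℂ)*(c:ℂ)^3*(s:ℂ)*(b2:ℂ) + (-10:ℂ)*(c:ℂ)^3*(s:ℂ)^3*(a2:ℂ) + (10:ℂ)*(c:ℂ)^3*(s:ℂ)^3*(a2:ℂ)*Complex.I^2 + (-6:ℂ)*(c:ℂ)^3*(s:ℂ)^3*(a1:ℂ)*Complex.I + ((15:ℂ)/2)*(c:ℂ)^4*(s:ℂ)^2*(a2:ℂ)*Complex.I + ((9:ℂ)/2)*(c:ℂ)^4*(s:ℂ)^2*(a1:ℂ) + (3:ℂ)*(c:ℂ)^5*(s:ℂ)*(a2:ℂ))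 * hI

open Complex in
lemma key2 (a1 a2 b1 b2 c s : ℝ) (hC : (c:ℂ)^2 + (s:ℂ)^2 = 1) :
    ((c:ℂ)+s*I) * ((-3*((a1:ℂ) - a2*I)) * ((c:ℂ)+s*I)^5 + (-2*((b1:ℂ) - b2*I)) * ((c:ℂ)+s*I)^3
      + 3*((c:ℂ)+s*I)^2 + (-((b1:ℂ)+b2*I))*((c:ℂ)+s*I))
    = ((c:ℂ)+s*I)^3 * (3*(1 - ((a1:ℂ)*(4*c^3-3*c) + a2*(3*s-4*s^3) + b1*c + b2*s))
        + I * ((-3*(a1:ℂ))*(3*s-4*s^3) + (3*a2)*(4*c^3-3*c) - b1*s + b2*c)) := by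
  have hI : Complex.I^2 = -1 := Complex.I_sq
  linear_combination ((-1:ℂ)*(s:ℂ)^2*(b2:ℂ)*Complex.I + (-1:ℂ)*(s:ℂ)^2*(b1:ℂ) + (9:ℂ)*(s:ℂ)^4*(a2:ℂ)*Complex.I + (-9:ℂ)*(s:ℂ)^4*(a1:ℂ) + (-2:ℂ)*(c:ℂ)*(s:ℂ)*(b2:ℂ) + (2:ℂ)*(c:ℂ)*(s:ℂ)*(b1:ℂ)*Complex.I + (18:ℂ)*(c:ℂ)*(s:ℂ)^3*(a2:ℂ) + (18:ℂ)*(c:ℂ)*(s:ℂ)^3*(a1:ℂ)*Complex.I + (1:ℂ)*(c:ℂ)^2*(b2:ℂ)*Complex.I + (1:ℂ)*(c:ℂ)^2*(b1:ℂ) + (18:ℂ)*(c:ℂ)^3*(s:ℂ)*(a2:ℂ) + (18:ℂ)*(c:ℂ)^3*(s:ℂ)*(a1:ℂ)*Complex.I + (-9:ℂ)*(c:ℂ)^4*(a2:ℂ)*Complex.I + (9:ℂ)*(c:ℂ)^4*(a1:ℂ)) * hC + ((-1:ℂ)*(s:ℂ)^2*(b2:ℂ)*Complex.I + (-1:ℂ)*(s:ℂ)^2*(b1:ℂ)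 + (1:ℂ)*(s:ℂ)^4*(b2:ℂ)*Complex.I + (2:ℂ)*(s:ℂ)^4*(b2:ℂ)*Complex.I^3 + (1:ℂ)*(s:ℂ)^4*(b1:ℂ) + (-1:ℂ)*(s:ℂ)^4*(b1:ℂ)*Complex.I^2 + (9:ℂ)*(s:ℂ)^4*(a2:ℂ)*Complex.I + (-9:ℂ)*(s:ℂ)^4*(a1:ℂ) + (9:ℂ)*(s:ℂ)^4*(a1:ℂ)*Complex.I^2 + (-9:ℂ)*(s:ℂ)^6*(a2:ℂ)*Complex.I + (-3:ℂ)*(s:ℂ)^6*(a2:ℂ)*Complex.I^3 + (3:ℂ)*(s:ℂ)^6*(a2:ℂ)*Complex.I^5 + (9:ℂ)*(s:ℂ)^6*(a1:ℂ) + (-9:ℂ)*(s:ℂ)^6*(a1:ℂ)*Complex.I^2 + (-3:ℂ)*(s:ℂ)^6*(a1:ℂ)*Complex.I^4 + (-2:ℂ)*(c:ℂ)*(s:ℂ)*(b2:ℂ) + (2:ℂ)*(c:ℂ)*(s:ℂ)^3*(b2:ℂ) + (7:ℂ)*(c:ℂ)*(s:ℂ)^3*(b2:ℂ)*Complex.I^2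 + (-2:ℂ)*(c:ℂ)*(s:ℂ)^3*(b1:ℂ)*Complex.I + (18:ℂ)*(c:ℂ)*(s:ℂ)^3*(a2:ℂ) + (9:ℂ)*(c:ℂ)*(s:ℂ)^3*(a2:ℂ)*Complex.I^2 + (18:ℂ)*(c:ℂ)*(s:ℂ)^3*(a1:ℂ)*Complex.I + (-18:ℂ)*(c:ℂ)*(s:ℂ)^5*(a2:ℂ) + (-18:ℂ)*(c:ℂ)*(s:ℂ)^5*(a2:ℂ)*Complex.I^2 + (18:ℂ)*(c:ℂ)*(s:ℂ)^5*(a2:ℂ)*Complex.I^4 + (-18:ℂ)*(c:ℂ)*(s:ℂ)^5*(a1:ℂ)*Complex.I + (-18:ℂ)*(c:ℂ)*(s:ℂ)^5*(a1:ℂ)*Complex.I^3 + (9:ℂ)*(c:ℂ)^2*(s:ℂ)^2*(b2:ℂ)*Complex.I + (27:ℂ)*(c:ℂ)^2*(s:ℂ)^2*(a2:ℂ)*Complex.I + (-45:ℂ)*(c:ℂ)^2*(s:ℂ)^4*(a2:ℂ)*Complex.I + (45:ℂ)*(c:ℂ)^2*(s:ℂ)^4*(a2:ℂ)*Complex.I^3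 + (9:ℂ)*(c:ℂ)^2*(s:ℂ)^4*(a1:ℂ) + (-45:ℂ)*(c:ℂ)^2*(s:ℂ)^4*(a1:ℂ)*Complex.I^2 + (5:ℂ)*(c:ℂ)^3*(s:ℂ)*(b2:ℂ) + (27:ℂ)*(c:ℂ)^3*(s:ℂ)*(a2:ℂ) + (-48:ℂ)*(c:ℂ)^3*(s:ℂ)^3*(a2:ℂ) + (48:ℂ)*(c:ℂ)^3*(s:ℂ)^3*(a2:ℂ)*Complex.I^2 + (-48:ℂ)*(c:ℂ)^3*(s:ℂ)^3*(a1:ℂ)*Complex.I + (9:ℂ)*(c:ℂ)^4*(s:ℂ)^2*(a2:ℂ)*Complex.I + (-9:ℂ)*(c:ℂ)^4*(s:ℂ)^2*(a1:ℂ) + (-18:ℂ)*(c:ℂ)^5*(s:ℂ)*(a2:ℂ)) * hI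
open Real in
lemma exists_angle (x y : ℝ) (h : x^2 + y^2 = 1) : ∃ φ : ℝ, x = cos φ ∧ y = sin φ := by
  have habs : ‖(⟨x, y⟩ : ℂ)‖ = 1 := by
    rw [Complex.norm_def, Complex.normSq]
    simp
    rw [show x*x + y*y = 1 by nlinarith]
  have hz : (⟨x, y⟩ : ℂ) ≠ 0 := by
    intro h0; rw [h0] at habs; simp at habs
  refine ⟨Complex.arg ⟨x, y⟩, ?_, ?_⟩
  · rw [Complex.cos_arg hz, habs]; simp
  · rw [Complex.sin_arg, habs]; simp

open Real in
lemma trig_form (c30 c21 c12 c03 : ℝ) (φ : ℝ) :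
    c30*(cos φ)^3 + 3*c21*(cos φ)^2*(sin φ) + 3*c12*(cos φ)*(sin φ)^2 + c03*(sin φ)^3
    = ((c30-3*c12)/4) * cos (3*φ) + ((3*c21-c03)/4) * sin (3*φ)
      + (3*(c30+c12)/4) * cos φ + (3*(c21+c03)/4) * sin φ := by
  rw [Real.cos_three_mul, Real.sin_three_mul]
  have h : (sin φ)^2 + (cos φ)^2 = 1 := sin_sq_add_cos_sq φ
  linear_combination (3*c12*(cos φ) + 3*c21*(sin φ)) * h

lemma double_root_dvd {P : Polynomial ℂ} {z : ℂ} (h0 : P.eval z = 0)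
    (h1 : (Polynomial.derivative P).eval z = 0) : (Polynomial.X - Polynomial.C z)^2 ∣ P := by
  obtain ⟨Q, hQ⟩ := (Polynomial.dvd_iff_isRoot.mpr h0)
  have hQz : Q.eval z = 0 := by
    have := congrArg (Polynomial.eval z) (congrArg Polynomial.derivative hQ)
    simp [Polynomial.derivative_mul] at this
    simpa [h1, Polynomial.eval_mul] using this.symm
  obtain ⟨R, hR⟩ := (Polynomial.dvd_iff_isRoot.mpr hQz)
  exact ⟨R, by rw [hQ, hR]; ring⟩
open Polynomial in
lemma factor_eqs (k6 k4 k2 k0 z1 z2 z3 : ℂ)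
    (h12 : z1 ≠ z2) (h13 : z1 ≠ z3) (h23 : z2 ≠ z3) (hzne : z1*z2*z3 ≠ 0)
    (hd1 : (X - C z1)^2 ∣ (C k6*X^6 + C k4*X^4 + X^3 + C k2*X^2 + C k0))
    (hd2 : (X - C z2)^2 ∣ (C k6*X^6 + C k4*X^4 + X^3 + C k2*X^2 + C k0))
    (hd3 : (X - C z3)^2 ∣ (C k6*X^6 + C k4*X^4 + X^3 + C k2*X^2 + C k0)) :
    k4 = 0 ∧ k2 = 0 ∧ 1 = -2*k6*(z1*z2*z3) ∧ k0 = k6*(z1*z2*z3)^2 := by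
  set P : Polynomial ℂ := C k6*X^6 + C k4*X^4 + X^3 + C k2*X^2 + C k0 with hPdef
  have hc3 : P.coeff 3 = 1 := by
    simp [hPdef, coeff_add, coeff_C_mul, coeff_X_pow, coeff_C]
  have hP0 : P ≠ 0 := fun h => by simp [h] at hc3
  have cop12 : IsCoprime (X - C z1) (X - C z2) :=
    Polynomial.isCoprime_X_sub_C_of_isUnit_sub (isUnit_iff_ne_zero.mpr (sub_ne_zero.mpr h12))
  have cop13 : IsCoprime (X - C z1) (X - C z3) :=
    Polynomial.isCoprime_X_sub_C_of_isUnit_sub (isUnit_iff_ne_zero.mpr (sub_ne_zero.mpr h13))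
  have cop23 : IsCoprime (X - C z2) (X - C z3) :=
    Polynomial.isCoprime_X_sub_C_of_isUnit_sub (isUnit_iff_ne_zero.mpr (sub_ne_zero.mpr h23))
  have hMdvd : (X - C z1)^2 * ((X - C z2)^2 * (X - C z3)^2) ∣ P :=
    ((cop12.pow.mul_right cop13.pow).mul_dvd hd1 ((cop23.pow).mul_dvd hd2 hd3))
  set M : Polynomial ℂ := (X - C z1)^2 * ((X - C z2)^2 * (X - C z3)^2) with hMdef
  have hM : M.Monic := ((monic_X_sub_C z1).pow 2).mul
    (((monic_X_sub_C z2).pow 2).mul ((monic_X_sub_C z3).pow 2))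
  have hMdeg : M.natDegree = 6 := by
    rw [hMdef, ((monic_X_sub_C z1).pow 2).natDegree_mul
      (((monic_X_sub_C z2).pow 2).mul ((monic_X_sub_C z3).pow 2)),
      ((monic_X_sub_C z2).pow 2).natDegree_mul ((monic_X_sub_C z3).pow 2),
      natDegree_pow, natDegree_pow, natDegree_pow, natDegree_X_sub_C, natDegree_X_sub_C, natDegree_X_sub_C]
  obtain ⟨R, hR⟩ := hMdvd
  have hR0 : R ≠ 0 := fun h => hP0 (by rw [hR, h, mul_zero])
  have hPdeg : P.natDegree ≤ 6 := by rw [hPdef]; compute_degree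
  have hRdeg : R.natDegree = 0 := by
    have h1 : P.natDegree = M.natDegree + R.natDegree := by
      rw [hR, natDegree_mul hM.ne_zero hR0]
    omega
  obtain hk : R = C (R.coeff 0) := eq_C_of_natDegree_eq_zero hRdeg
  set k := R.coeff 0
  rw [hk] at hR
  have hexp : M * C k = C k * X^6 + C (-2*k*(z1+z2+z3)) * X^5
      + C (k*((z1+z2+z3)^2 + 2*(z1*z2+z1*z3+z2*z3))) * X^4
      + C (-2*k*(z1*z2*z3 + (z1+z2+z3)*(z1*z2+z1*z3+z2*z3))) * X^3
      + C (k*((z1*z2+z1*z3+z2*z3)^2 + 2*(z1+z2+z3)*(z1*z2*z3))) * X^2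
      + C (-2*k*((z1*z2+z1*z3+z2*z3)*(z1*z2*z3))) * X^1 + C (k*(z1*z2*z3)^2) := by
    rw [hMdef]
    simp only [map_mul, map_add, map_neg, map_pow, map_ofNat, map_one]
    ring
  rw [hexp] at hR
  have coeffs := fun i => congrArg (fun q => Polynomial.coeff q i) hR
  have h6 := coeffs 6
  have h5 := coeffs 5
  have h4 := coeffs 4
  have h3 := coeffs 3
  have h2 := coeffs 2
  have h1 := coeffs 1
  have h0 := coeffs 0
  simp only [hPdef, Polynomial.coeff_add, Polynomial.coeff_C_mul, Polynomial.coeff_X_pow,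
    Polynomial.coeff_C] at h6 h5 h4 h3 h2 h1 h0
  norm_num at h6 h5 h4 h3 h2 h1 h0
  have hk0 : k ≠ 0 := by intro h; rw [h] at h3; simp at h3
  have he1 : z1+z2+z3 = 0 := h5.resolve_left hk0
  have he2 : z1*z2+z1*z3+z2*z3 = 0 := by
    rcases h1 with h|h|h
    · exact absurd h hk0
    · exact h
    · exfalso; apply hzne; rcases h with (h|h)|h <;> simp [h]
  refine ⟨?_, ?_, ?_, ?_⟩
  · rw [h4, he1, he2]; ring
  · rw [h2, he2, he1]; ring
  · rw [h6]; linear_combination h3 - 2*k*(z1*z2+z1*z3+z2*z3)*he1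
  · rw [h6]; exact h0

open Real in
theorem stmt_9 (c30 c21 c12 c03 : ℝ)
    (p : ℝ → ℝ → ℝ)
    (hp : p = fun x1 x2 => c30*x1^3 + 3*c21*x1^2*x2 + 3*c12*x1*x2^2 + c03*x2^3)
    (hmax : IsGreatest {y : ℝ | ∃ x1 x2 : ℝ, x1^2 + x2^2 = 1 ∧ y = p x1 x2} 1)
    (u v w : ℝ × ℝ) (hu : u.1^2 + u.2^2 = 1) (hv : v.1^2 + v.2^2 = 1)
    (hw : w.1^2 + w.2^2 = 1)
    (huv : u ≠ v) (huw : u ≠ w) (hvw : v ≠ w)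
    (hpu : p u.1 u.2 = 1) (hpv : p v.1 v.2 = 1) (hpw : p w.1 w.2 = 1) :
    ∃ φ0 : ℝ,
      (∀ φ : ℝ, p (cos φ) (sin φ) = cos (3*(φ - φ0))) ∧
      {x : ℝ × ℝ | x.1^2 + x.2^2 = 1 ∧ p x.1 x.2 = 1} =
        {(cos φ0, sin φ0), (cos (φ0 + 2*π/3), sin (φ0 + 2*π/3)),
          (cos (φ0 - 2*π/3), sin (φ0 - 2*π/3))} := by
  obtain ⟨φu, hu1, hu2⟩ := exists_angle u.1 u.2 hu
  obtain ⟨φv, hv1, hv2⟩ := exists_angle v.1 v.2 hv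
  obtain ⟨φw, hw1, hw2⟩ := exists_angle w.1 w.2 hw
  have hq : ∀ φ : ℝ, p (cos φ) (sin φ) = ((c30-3*c12)/4)*cos (3*φ) + ((3*c21-c03)/4)*sin (3*φ)
      + (3*(c30+c12)/4)*cos φ + (3*(c21+c03)/4)*sin φ := by
    intro φ; rw [hp]; exact trig_form c30 c21 c12 c03 φ
  set a1 : ℝ := (c30-3*c12)/4 with ha1def
  set a2 : ℝ := (3*c21-c03)/4 with ha2def
  set b1 : ℝ := 3*(c30+c12)/4 with hb1def
  set b2 : ℝ := 3*(c21+c03)/4 with hb2def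
  have hub : ∀ φ : ℝ, p (cos φ) (sin φ) ≤ 1 :=
    fun φ => hmax.2 ⟨cos φ, sin φ, cos_sq_add_sin_sq φ, rfl⟩
  -- derivative vanishes at any maximum point
  have hkey : ∀ ψ : ℝ, p (cos ψ) (sin ψ) = 1 →
      a1*(-sin (3*ψ)*3) + a2*(cos (3*ψ)*3) + b1*(-sin ψ) + b2*cos ψ = 0 := by
    intro ψ hψ
    have hloc : IsLocalMax (fun t : ℝ => a1*cos (3*t) + a2*sin (3*t) + b1*cos t + b2*sin t) ψ := by
      apply Filter.Eventually.of_forall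
      intro t
      show a1*cos (3*t) + a2*sin (3*t) + b1*cos t + b2*sin t
        ≤ a1*cos (3*ψ) + a2*sin (3*ψ) + b1*cos ψ + b2*sin ψ
      rw [← hq t, ← hq ψ, hψ]
      exact hub t
    have h3t : ∀ x : ℝ, HasDerivAt (fun t : ℝ => 3*t) 3 x := by
      intro x; simpa using (hasDerivAt_id x).const_mul (3:ℝ)
    have hder : HasDerivAt (fun t : ℝ => a1*cos (3*t) + a2*sin (3*t) + b1*cos t + b2*sin t)
        (a1*(-sin (3*ψ)*3) + a2*(cos (3*ψ)*3) + b1*(-sin ψ) + b2*cos ψ) ψ :=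
      ((((h3t ψ).cos.const_mul a1).add ((h3t ψ).sin.const_mul a2)).add
        ((Real.hasDerivAt_cos ψ).const_mul b1)).add ((Real.hasDerivAt_sin ψ).const_mul b2)
    exact hloc.hasDerivAt_eq_zero hder
  -- values and derivatives at the three maxima, in polynomial-friendly form
  have hmaxu : p (cos φu) (sin φu) = 1 := by rw [← hu1, ← hu2]; exact hpu
  have hmaxv : p (cos φv) (sin φv) = 1 := by rw [← hv1, ← hv2]; exact hpv
  have hmaxw : p (cos φw) (sin φw) = 1 := by rw [← hw1, ← hw2]; exact hpw
  have hQ : ∀ ψ : ℝ, p (cos ψ) (sin ψ) = 1 →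
      (a1*(4*cos ψ^3-3*cos ψ) + a2*(3*sin ψ-4*sin ψ^3) + b1*cos ψ + b2*sin ψ : ℝ) = 1 := by
    intro ψ hψ
    have h := (hq ψ).symm.trans hψ
    rw [Real.cos_three_mul, Real.sin_three_mul] at h
    exact h
  have hD : ∀ ψ : ℝ, p (cos ψ) (sin ψ) = 1 →
      ((-3*a1)*(3*sin ψ-4*sin ψ^3) + (3*a2)*(4*cos ψ^3-3*cos ψ) - b1*sin ψ + b2*cos ψ : ℝ) = 0 := by
    intro ψ hψ
    have h := hkey ψ hψ
    rw [Real.cos_three_mul, Real.sin_three_mul] at h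
    linarith
  -- complex polynomial setup
  set P : Polynomial ℂ := Polynomial.C (-((a1:ℂ) - a2*Complex.I)/2) * Polynomial.X^6
      + Polynomial.C (-((b1:ℂ) - b2*Complex.I)/2) * Polynomial.X^4 + Polynomial.X^3
      + Polynomial.C (-((b1:ℂ)+b2*Complex.I)/2) * Polynomial.X^2
      + Polynomial.C (-((a1:ℂ)+a2*Complex.I)/2) with hPdef
  have hCast : ∀ ψ : ℝ, ((cos ψ : ℝ):ℂ)^2 + ((sin ψ : ℝ):ℂ)^2 = 1 := by
    intro ψ
    have := Real.cos_sq_add_sin_sq ψ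
    exact_mod_cast congrArg (fun r : ℝ => (r:ℂ)) this
  have hPe : ∀ c s : ℝ, (c:ℂ)^2 + (s:ℂ)^2 = 1 →
      P.eval ((c:ℂ)+s*Complex.I) = ((c:ℂ)+s*Complex.I)^3
        * (1 - ((a1:ℂ)*(4*c^3-3*c) + a2*(3*s-4*s^3) + b1*c + b2*s)) := by
    intro c s h
    rw [hPdef]
    simp only [Polynomial.eval_add, Polynomial.eval_mul, Polynomial.eval_pow,
      Polynomial.eval_C, Polynomial.eval_X]
    exact key1 a1 a2 b1 b2 c s h
  have hPd : Polynomial.derivative P = Polynomial.C (-((a1:ℂ)-a2*Complex.I)/2*6) * Polynomial.X^5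
      + Polynomial.C (-((b1:ℂ)-b2*Complex.I)/2*4) * Polynomial.X^3
      + Polynomial.C (3:ℂ) * Polynomial.X^2
      + Polynomial.C (-((b1:ℂ)+b2*Complex.I)/2*2) * Polynomial.X^1 := by
    rw [hPdef]
    simp only [Polynomial.derivative_add, Polynomial.derivative_C_mul_X_pow,
      Polynomial.derivative_X_pow, Polynomial.derivative_C, add_zero]
    norm_num
  have hP'e : ∀ c s : ℝ, (c:ℂ)^2 + (s:ℂ)^2 = 1 →
      ((c:ℂ)+s*Complex.I) * (Polynomial.derivative P).eval ((c:ℂ)+s*Complex.I)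
      = ((c:ℂ)+s*Complex.I)^3 * (3*(1 - ((a1:ℂ)*(4*c^3-3*c) + a2*(3*s-4*s^3) + b1*c + b2*s))
          + Complex.I * ((-3*(a1:ℂ))*(3*s-4*s^3) + (3*a2)*(4*c^3-3*c) - b1*s + b2*c)) := by
    intro c s h
    rw [hPd]
    simp only [Polynomial.eval_add, Polynomial.eval_mul, Polynomial.eval_pow,
      Polynomial.eval_C, Polynomial.eval_X]
    linear_combination key2 a1 a2 b1 b2 c s h
  -- roots
  have hzne : ∀ ψ : ℝ, ((cos ψ : ℝ):ℂ) + (sin ψ : ℝ)*Complex.I ≠ 0 := by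
    intro ψ h0
    have hre := congrArg Complex.re h0
    have him := congrArg Complex.im h0
    simp [-Complex.ofReal_cos, -Complex.ofReal_sin] at hre him
    have := Real.cos_sq_add_sin_sq ψ
    rw [hre, him] at this
    norm_num at this
  have hroot : ∀ ψ : ℝ, p (cos ψ) (sin ψ) = 1 →
      P.eval (((cos ψ : ℝ):ℂ) + (sin ψ : ℝ)*Complex.I) = 0 ∧
      (Polynomial.derivative P).eval (((cos ψ : ℝ):ℂ) + (sin ψ : ℝ)*Complex.I) = 0 := by
    intro ψ hψ
    have hq2 : ((a1:ℂ)*(4*(cos ψ:ℂ)^3-3*(cos ψ:ℂ)) + (a2:ℂ)*(3*(sin ψ:ℂ)-4*(sin ψ:ℂ)^3)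
        + (b1:ℂ)*(cos ψ:ℂ) + (b2:ℂ)*(sin ψ:ℂ)) = 1 := by exact_mod_cast hQ ψ hψ
    have hd2 : ((-3*(a1:ℂ))*(3*(sin ψ:ℂ)-4*(sin ψ:ℂ)^3) + (3*(a2:ℂ))*(4*(cos ψ:ℂ)^3-3*(cos ψ:ℂ))
        - (b1:ℂ)*(sin ψ:ℂ) + (b2:ℂ)*(cos ψ:ℂ)) = 0 := by exact_mod_cast hD ψ hψ
    constructor
    · rw [hPe _ _ (hCast ψ), hq2]; ring
    · have h3 := hP'e (cos ψ) (sin ψ) (hCast ψ)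
      rw [hq2, hd2] at h3
      have h4 : (((cos ψ : ℝ):ℂ) + (sin ψ : ℝ)*Complex.I) *
          (Polynomial.derivative P).eval (((cos ψ : ℝ):ℂ) + (sin ψ : ℝ)*Complex.I) = 0 := by
        rw [h3]; ring
      rcases mul_eq_zero.mp h4 with h|h
      · exact absurd h (hzne ψ)
      · exact h
  have hdvd : ∀ ψ : ℝ, p (cos ψ) (sin ψ) = 1 →
      (Polynomial.X - Polynomial.C (((cos ψ : ℝ):ℂ) + (sin ψ : ℝ)*Complex.I))^2 ∣ P := by
    intro ψ hψ
    exact double_root_dvd (hroot ψ hψ).1 (hroot ψ hψ).2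
  -- distinctness of the roots
  have hne : ∀ (x y : ℝ × ℝ) (φx φy : ℝ), x.1 = cos φx → x.2 = sin φx → y.1 = cos φy →
      y.2 = sin φy → x ≠ y →
      ((cos φx : ℝ):ℂ) + (sin φx : ℝ)*Complex.I ≠ ((cos φy : ℝ):ℂ) + (sin φy : ℝ)*Complex.I := by
    intro x y φx φy hx1 hx2 hy1 hy2 hxy h
    apply hxy
    have hre := congrArg Complex.re h
    have him := congrArg Complex.im h
    simp [-Complex.ofReal_cos, -Complex.ofReal_sin] at hre him
    exact Prod.ext_iff.mpr ⟨by rw [hx1, hy1, hre], by rw [hx2, hy2, him]⟩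
  -- apply the factorization lemma
  have hd1 := hdvd φu hmaxu
  have hd2 := hdvd φv hmaxv
  have hd3 := hdvd φw hmaxw
  rw [hPdef] at hd1 hd2 hd3
  obtain ⟨hk4, hk2, hke, hk0⟩ := factor_eqs (-((a1:ℂ) - a2*Complex.I)/2)
    (-((b1:ℂ) - b2*Complex.I)/2) (-((b1:ℂ)+b2*Complex.I)/2) (-((a1:ℂ)+a2*Complex.I)/2)
    (((cos φu : ℝ):ℂ) + (sin φu : ℝ)*Complex.I) (((cos φv : ℝ):ℂ) + (sin φv : ℝ)*Complex.I)
    (((cos φw : ℝ):ℂ) + (sin φw : ℝ)*Complex.I)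
    (hne u v φu φv hu1 hu2 hv1 hv2 huv) (hne u w φu φw hu1 hu2 hw1 hw2 huw)
    (hne v w φv φw hv1 hv2 hw1 hw2 hvw)
    (mul_ne_zero (mul_ne_zero (hzne φu) (hzne φv)) (hzne φw)) hd1 hd2 hd3
  -- extract the real information
  set e3 : ℂ := (((cos φu : ℝ):ℂ) + (sin φu : ℝ)*Complex.I) * (((cos φv : ℝ):ℂ)
    + (sin φv : ℝ)*Complex.I) * (((cos φw : ℝ):ℂ) + (sin φw : ℝ)*Complex.I) with he3def
  have hb : (b1:ℂ) - (b2:ℂ)*Complex.I = 0 := by linear_combination (-2)*hk4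
  have hb1 : b1 = 0 := by have := congrArg Complex.re hb; simpa using this
  have hb2 : b2 = 0 := by have := congrArg Complex.im hb; simpa using this
  have halpha : ((a1:ℂ) - a2*Complex.I) * e3 = 1 := by
    rw [he3def]; linear_combination -hke
  have he3 : (a1:ℂ) + a2*Complex.I = e3 := by
    rw [he3def]; linear_combination (-2)*hk0 + e3*halpha
  have hprod : ((a1:ℂ) + a2*Complex.I)*((a1:ℂ) - a2*Complex.I) = 1 := by
    rw [he3]; linear_combination halpha
  have ha12 : a1^2 + a2^2 = 1 := by
    have h2 : ((a1^2+a2^2 : ℝ) : ℂ) = 1 := by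
      push_cast
      linear_combination hprod + (a2:ℂ)^2*Complex.I_sq
    exact_mod_cast h2
  have he3abs : ‖e3‖ = 1 := by
    rw [← he3, Complex.norm_add_mul_I, ha12, Real.sqrt_one]
  have he3ne : e3 ≠ 0 := mul_ne_zero (mul_ne_zero (hzne φu) (hzne φv)) (hzne φw)
  set φ0 : ℝ := Complex.arg e3 / 3 with hφ0def
  have h3φ0 : 3*φ0 = Complex.arg e3 := by rw [hφ0def]; ring
  have ha1c : cos (3*φ0) = a1 := by
    rw [h3φ0, Complex.cos_arg he3ne, he3abs, div_one, ← he3]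
    simp
  have ha2s : sin (3*φ0) = a2 := by
    rw [h3φ0, Complex.sin_arg, he3abs, div_one, ← he3]
    simp
  have hbull : ∀ φ : ℝ, p (cos φ) (sin φ) = cos (3*(φ - φ0)) := by
    intro φ
    rw [hq φ, hb1, hb2, show (3:ℝ)*(φ-φ0) = 3*φ - 3*φ0 by ring, Real.cos_sub, ha1c, ha2s]
    ring
  refine ⟨φ0, hbull, ?_⟩
  ext x
  simp only [Set.mem_setOf_eq, Set.mem_insert_iff, Set.mem_singleton_iff]
  constructor
  · rintro ⟨hx1, hx2⟩
    obtain ⟨ψ, hψ1, hψ2⟩ := exists_angle x.1 x.2 hx1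
    have hcψ : cos (3*(ψ - φ0)) = 1 := by rw [← hbull ψ, ← hψ1, ← hψ2]; exact hx2
    obtain ⟨n, hn⟩ := (Real.cos_eq_one_iff _).mp hcψ
    obtain ⟨m, r, hr, hnm⟩ : ∃ m r : ℤ, (r = 0 ∨ r = 1 ∨ r = 2) ∧ n = 3*m + r :=
      ⟨n/3, n%3, by omega, by omega⟩
    rw [hnm] at hn
    push_cast at hn
    have hxeq : x = (cos ψ, sin ψ) := Prod.ext_iff.mpr ⟨hψ1, hψ2⟩
    rcases hr with rfl|rfl|rfl
    · left
      have hψeq : ψ = φ0 + ((m:ℤ):ℝ)*(2*π) := by push_cast; linear_combination (-1/3)*hn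
      rw [hxeq, hψeq, Real.cos_add_int_mul_two_pi, Real.sin_add_int_mul_two_pi]
    · right; left
      have hψeq : ψ = (φ0 + 2*π/3) + ((m:ℤ):ℝ)*(2*π) := by push_cast; linear_combination (-1/3)*hn
      rw [hxeq, hψeq, Real.cos_add_int_mul_two_pi, Real.sin_add_int_mul_two_pi]
    · right; right
      have hψeq : ψ = (φ0 - 2*π/3) + ((m+1:ℤ):ℝ)*(2*π) := by push_cast; linear_combination (-1/3)*hn
      rw [hxeq, hψeq, Real.cos_add_int_mul_two_pi, Real.sin_add_int_mul_two_pi]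
  · rintro (rfl|rfl|rfl)
    · refine ⟨by simp [Real.cos_sq_add_sin_sq], ?_⟩
      rw [hbull φ0, sub_self, mul_zero, Real.cos_zero]
    · refine ⟨by simp [Real.cos_sq_add_sin_sq], ?_⟩
      rw [hbull, show (3:ℝ)*((φ0 + 2*π/3) - φ0) = 2*π by ring, Real.cos_two_pi]
    · refine ⟨by simp [Real.cos_sq_add_sin_sq], ?_⟩
      rw [hbull, show (3:ℝ)*((φ0 - 2*π/3) - φ0) = -(2*π) by ring, Real.cos_neg, Real.cos_two_pi]
end

section
/- Let p be a homogeneous cubic on ℝ^2 attaining maximum value 1 on the unit circle at two distinct points u, v. Then the angle between u and v is at most 2π/3. -/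
open Real in
lemma tangent_zero_aux (c30 c21 c12 c03 w1 w2 f1 f2 : ℝ)
    (hw : w1^2 + w2^2 = 1) (hf : f1^2 + f2^2 = 1) (hwf : w1*f1 + w2*f2 = 0)
    (hb : ∀ x1 x2 : ℝ, x1^2 + x2^2 = 1 → c30*x1^3 + 3*c21*x1^2*x2 + 3*c12*x1*x2^2 + c03*x2^3 ≤ 1)
    (hmax : c30*w1^3 + 3*c21*w1^2*w2 + 3*c12*w1*w2^2 + c03*w2^3 = 1) :
    c30*w1^2*f1 + c21*(w1^2*f2 + 2*w1*w2*f1) + c12*(2*w1*w2*f2 + w2^2*f1) + c03*w2^2*f2 = 0 := by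
  set G : ℝ → ℝ := fun θ => c30*(cos θ*w1 + sin θ*f1)^3 + 3*c21*(cos θ*w1 + sin θ*f1)^2*(cos θ*w2 + sin θ*f2)
      + 3*c12*(cos θ*w1 + sin θ*f1)*(cos θ*w2 + sin θ*f2)^2 + c03*(cos θ*w2 + sin θ*f2)^3 with hG
  have hcirc : ∀ θ : ℝ, (cos θ*w1 + sin θ*f1)^2 + (cos θ*w2 + sin θ*f2)^2 = 1 := by
    intro θ
    have h := sin_sq_add_cos_sq θ
    linear_combination (cos θ)^2 * hw + (sin θ)^2 * hf + (2*cos θ*sin θ) * hwf + h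
  have hG0 : G 0 = 1 := by
    simp only [hG, cos_zero, sin_zero]
    linear_combination hmax
  have hle : ∀ θ, G θ ≤ G 0 := by
    intro θ
    rw [hG0]
    exact hb _ _ (hcirc θ)
  have hlocal : IsLocalMax G 0 := Filter.Eventually.of_forall hle
  have hA : HasDerivAt (fun θ : ℝ => cos θ*w1 + sin θ*f1) f1 0 := by
    refine HasDerivAt.congr_deriv ((((Real.hasDerivAt_cos 0).mul_const w1).add ((Real.hasDerivAt_sin 0).mul_const f1)).congr_of_eventuallyEq (Filter.Eventually.of_forall fun θ => ?_)) ?_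
    · rfl
    · simp
  have hB : HasDerivAt (fun θ : ℝ => cos θ*w2 + sin θ*f2) f2 0 := by
    refine HasDerivAt.congr_deriv ((((Real.hasDerivAt_cos 0).mul_const w2).add ((Real.hasDerivAt_sin 0).mul_const f2)).congr_of_eventuallyEq (Filter.Eventually.of_forall fun θ => ?_)) ?_
    · rfl
    · simp
  have hGd : HasDerivAt G (3*(c30*w1^2*f1 + c21*(w1^2*f2 + 2*w1*w2*f1) + c12*(2*w1*w2*f2 + w2^2*f1) + c03*w2^2*f2)) 0 := by
    have h1 := (hA.pow 3).const_mul c30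
    have h2 := (((hA.pow 2).mul hB).const_mul (3*c21))
    have h3 := ((hA.mul (hB.pow 2)).const_mul (3*c12))
    have h4 := (hB.pow 3).const_mul c03
    have h := (h1.add h2).add (h3.add h4)
    refine HasDerivAt.congr_deriv (h.congr_of_eventuallyEq (Filter.Eventually.of_forall fun θ => ?_)) ?_
    · simp only [hG, Pi.add_apply, Pi.pow_apply, Pi.mul_apply]; ring
    · simp only [cos_zero, sin_zero, Pi.pow_apply]; push_cast; ring
  have := hlocal.deriv_eq_zero
  rw [hGd.deriv] at this
  linarith

set_option maxHeartbeats 1000000 in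
open Real in
theorem stmt_10 (c30 c21 c12 c03 : ℝ)
    (p : ℝ → ℝ → ℝ)
    (hp : p = fun x1 x2 => c30*x1^3 + 3*c21*x1^2*x2 + 3*c12*x1*x2^2 + c03*x2^3)
    (hb : ∀ x1 x2 : ℝ, x1^2 + x2^2 = 1 → p x1 x2 ≤ 1)
    (u v : ℝ × ℝ) (hu : u.1^2 + u.2^2 = 1) (hv : v.1^2 + v.2^2 = 1)
    (huv : u ≠ v) (hpu : p u.1 u.2 = 1) (hpv : p v.1 v.2 = 1) :
    arccos (u.1*v.1 + u.2*v.2) ≤ 2*π/3 := by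
  subst hp
  obtain ⟨u1, u2⟩ := u
  obtain ⟨v1, v2⟩ := v
  dsimp only at hu hv hpu hpv hb ⊢
  have hcross : u1*v2 - u2*v1 ≠ 0 := by
    intro h0
    have ht2 : (u1*v1 + u2*v2 - 1)*(u1*v1 + u2*v2 + 1) = 0 := by
      linear_combination (v1^2+v2^2)*hu + hv - (u1*v2 - u2*v1)*h0
    rcases mul_eq_zero.mp ht2 with h1 | h1
    · apply huv
      have hz : (v1-u1)^2 + (v2-u2)^2 = 0 := by linear_combination hu + hv - 2*h1
      have h2 : v1 = u1 := by nlinarith [sq_nonneg (v1-u1), sq_nonneg (v2-u2)]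
      have h3 : v2 = u2 := by nlinarith [sq_nonneg (v1-u1), sq_nonneg (v2-u2)]
      rw [h2, h3]
    · have hz : (v1+u1)^2 + (v2+u2)^2 = 0 := by linear_combination hu + hv + 2*h1
      have h2 : v1 = -u1 := by nlinarith [sq_nonneg (v1+u1), sq_nonneg (v2+u2)]
      have h3 : v2 = -u2 := by nlinarith [sq_nonneg (v1+u1), sq_nonneg (v2+u2)]
      rw [h2, h3] at hpv
      have : (2:ℝ) = 0 := by linear_combination -hpu - hpv
      norm_num at this
  obtain ⟨σ, hσdef⟩ : ∃ x : ℝ, x = if 0 < u1*v2 - u2*v1 then (1:ℝ) else -1 := ⟨_, rfl⟩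
  have hσ2 : σ^2 = 1 := by rw [hσdef]; split <;> norm_num
  obtain ⟨s, hsdef⟩ : ∃ x : ℝ, x = σ * (u1*v2 - u2*v1) := ⟨_, rfl⟩
  have hs : 0 < s := by
    rw [hsdef, hσdef]
    rcases lt_or_ge 0 (u1*v2 - u2*v1) with h | h
    · rw [if_pos h]; linarith
    · rw [if_neg (not_lt.mpr h)]
      have h' : u1*v2 - u2*v1 < 0 := lt_of_le_of_ne h hcross
      nlinarith
  obtain ⟨t, htdef⟩ : ∃ x : ℝ, x = u1*v1 + u2*v2 := ⟨_, rfl⟩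
  obtain ⟨e1, he1def⟩ : ∃ x : ℝ, x = -(σ*u2) := ⟨_, rfl⟩
  obtain ⟨e2, he2def⟩ : ∃ x : ℝ, x = σ*u1 := ⟨_, rfl⟩
  have he : e1^2 + e2^2 = 1 := by
    rw [he1def, he2def]; linear_combination (u1^2+u2^2)*hσ2 + hu
  have hue : u1*e1 + u2*e2 = 0 := by rw [he1def, he2def]; ring
  have hv1 : v1 = t*u1 + s*e1 := by
    rw [htdef, hsdef, he1def]
    linear_combination ((u1*v2 - u2*v1)*u2)*hσ2 - v1*hu
  have hv2 : v2 = t*u2 + s*e2 := by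
    rw [htdef, hsdef, he2def]
    linear_combination (-(u1*v2 - u2*v1)*u1)*hσ2 - v2*hu
  have hst : s^2 + t^2 = 1 := by
    rw [hsdef, htdef]
    linear_combination ((u1*v2 - u2*v1)^2)*hσ2 + (v1^2+v2^2)*hu + hv
  have hK1 := tangent_zero_aux c30 c21 c12 c03 u1 u2 e1 e2 hu he hue hb hpu
  obtain ⟨f1, hf1def⟩ : ∃ x : ℝ, x = -s*u1 + t*e1 := ⟨_, rfl⟩
  obtain ⟨f2, hf2def⟩ : ∃ x : ℝ, x = -s*u2 + t*e2 := ⟨_, rfl⟩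
  have hf : f1^2 + f2^2 = 1 := by
    rw [hf1def, hf2def]
    linear_combination s^2*hu + t^2*he - 2*s*t*hue + hst
  have hvf : v1*f1 + v2*f2 = 0 := by
    rw [hv1, hv2, hf1def, hf2def]
    linear_combination (-(s*t))*hu + s*t*he + (t^2 - s^2)*hue
  have hL1 := tangent_zero_aux c30 c21 c12 c03 v1 v2 f1 f2 hv hf hvf hb hpv
  obtain ⟨K2, hK2⟩ : ∃ x : ℝ, x = c30*e1^2*u1 + c21*(e1^2*u2 + 2*e1*e2*u1) + c12*(2*e1*e2*u2 + e2^2*u1) + c03*e2^2*u2 := ⟨_, rfl⟩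
  obtain ⟨K3, hK3⟩ : ∃ x : ℝ, x = c30*e1^3 + 3*c21*e1^2*e2 + 3*c12*e1*e2^2 + c03*e2^3 := ⟨_, rfl⟩
  have E1 : t^3 + 3*t*s^2*K2 + s^3*K3 = 1 := by
    rw [hv1, hv2] at hpv
    rw [hK2, hK3]
    linear_combination hpv - t^3*hpu - 3*t^2*s*hK1
  have E2 : -(t^2*s) + (2*t^2*s - s^3)*K2 + s^2*t*K3 = 0 := by
    rw [hv1, hv2, hf1def, hf2def] at hL1
    rw [hK2, hK3]
    linear_combination hL1 + t^2*s*hpu - (t^3 - 2*t*s^2)*hK1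
  have hr3 : Real.sqrt 3 ^ 2 = 3 := Real.sq_sqrt (by norm_num)
  have hrpos : 0 < Real.sqrt 3 := Real.sqrt_pos.mpr (by norm_num)
  have hwcirc : (-(1/2)*u1 - (Real.sqrt 3/2)*e1)^2 + (-(1/2)*u2 - (Real.sqrt 3/2)*e2)^2 = 1 := by
    linear_combination (1/4)*hu + ((e1^2+e2^2)/4)*hr3 + (3/4)*he + (Real.sqrt 3/2)*hue
  have hw := hb _ _ hwcirc
  have hpw : c30*(-(1/2)*u1 - (Real.sqrt 3/2)*e1)^3
      + 3*c21*(-(1/2)*u1 - (Real.sqrt 3/2)*e1)^2*(-(1/2)*u2 - (Real.sqrt 3/2)*e2)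
      + 3*c12*(-(1/2)*u1 - (Real.sqrt 3/2)*e1)*(-(1/2)*u2 - (Real.sqrt 3/2)*e2)^2
      + c03*(-(1/2)*u2 - (Real.sqrt 3/2)*e2)^3
      = -1/8 - 9/8*K2 - 3*Real.sqrt 3/8*K3 := by
    linear_combination (-1/8 : ℝ)*hpu - (3*Real.sqrt 3/8)*hK1
      + (-(3/8)*K2 - (Real.sqrt 3/8)*K3)*hr3
      + (3*(Real.sqrt 3)^2/8)*hK2 + ((Real.sqrt 3)^3/8)*hK3
  rw [hpw] at hw
  clear hb hpu hpv hK1 hL1 hwcirc hpw hv1 hv2 hf hvf he hue hσ2 hv hu huv hcross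
  clear hf1def hf2def he1def he2def hσdef hsdef hK2 hK3
  have hthalf : -(1/2) ≤ t := by
    by_contra hcon
    push_neg at hcon
    have F1 : s^2*K2 = t - t^2 := by
      linear_combination t*E1 - s*E2 - (s^2*K2 + t^2)*hst
    have F2 : s^3*K3 = 1 - 3*t^2 + 2*t^3 := by
      linear_combination E1 - 3*t*F1
    have hmul : 8*s^3*(-1/8 - 9/8*K2 - 3*Real.sqrt 3/8*K3) ≤ 8*s^3*1 :=
      mul_le_mul_of_nonneg_left hw (by positivity)
    have hA1 : 9*s^3*K2 = 9*s*(t - t^2) := by linear_combination 9*s*F1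
    have hA2 : 3*Real.sqrt 3*(s^3*K3) = 3*Real.sqrt 3*(1 - 3*t^2 + 2*t^3) := by rw [F2]
    have h8 : 0 ≤ 9*s^3 + 9*s*(t - t^2) + 3*Real.sqrt 3*(1 - 3*t^2 + 2*t^3) := by
      linarith [hmul, hA1, hA2]
    have heq : 9*s^3 + 9*s*(t - t^2) + 3*Real.sqrt 3*(1 - 3*t^2 + 2*t^3)
        = 3*((1-t)*(1+2*t))*(3*s + Real.sqrt 3*(1-t)) := by
      linear_combination 9*s*hst
    rw [heq] at h8
    have hsum : 0 < 3*s + Real.sqrt 3*(1-t) := by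
      linarith [hs, mul_pos hrpos (show (0:ℝ) < 1 - t by linarith)]
    have hprod : (1-t)*(1+2*t) < 0 := mul_neg_of_pos_of_neg (by linarith) (by linarith)
    linarith [mul_neg_of_neg_of_pos hprod hsum, h8]
  rw [← htdef]
  have ht1 : t ≤ 1 := by nlinarith [hst, sq_nonneg s, hs]
  have htm1 : (-1:ℝ) ≤ t := by linarith
  by_contra hcon
  push_neg at hcon
  have h0 : (0:ℝ) ≤ 2*Real.pi/3 := by positivity
  have hlt := Real.cos_lt_cos_of_nonneg_of_le_pi h0 (Real.arccos_le_pi t) hcon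
  rw [Real.cos_arccos htm1 ht1] at hlt
  have hcos : Real.cos (2*Real.pi/3) = -(1/2) := by
    rw [show (2*Real.pi/3) = Real.pi - Real.pi/3 by ring, Real.cos_pi_sub, Real.cos_pi_div_three]
  rw [hcos] at hlt
  linarith
end

section
/- For all real x1, x2, x3 with x1^2 + x2^2 + x3^2 = 1 and every c ∈ (-1, 1/2), the identity x1^3 + (3/2)(x2^2 + 2c x3^2) x1 + √(1-2c) ((3/2) x2^2 x3 + (1+c) x3^3) = -(1/2)(x1 + √(1-2c) x3)^3 + (3/2)(x1 + √(1-2c) x3) holds. Consequently this cubic is bounded by 1 on the unit sphere, with its maximum attained exactly on the circle {x ∈ S^2 : x1 + √(1-2c) x3 = 1}. -/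
open Real in
theorem stmt_12 (c : ℝ) (hc : c ∈ Set.Ioo (-1 : ℝ) (1/2))
    (x1 x2 x3 : ℝ) (hx : x1^2 + x2^2 + x3^2 = 1) :
    (x1^3 + (3/2)*(x2^2 + 2*c*x3^2)*x1
        + Real.sqrt (1 - 2*c) * ((3/2)*x2^2*x3 + (1 + c)*x3^3) =
      -(1/2)*(x1 + Real.sqrt (1 - 2*c)*x3)^3 + (3/2)*(x1 + Real.sqrt (1 - 2*c)*x3)) ∧
    (x1^3 + (3/2)*(x2^2 + 2*c*x3^2)*x1
        + Real.sqrt (1 - 2*c) * ((3/2)*x2^2*x3 + (1 + c)*x3^3) ≤ 1) ∧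
    (x1^3 + (3/2)*(x2^2 + 2*c*x3^2)*x1
        + Real.sqrt (1 - 2*c) * ((3/2)*x2^2*x3 + (1 + c)*x3^3) = 1 ↔
      x1 + Real.sqrt (1 - 2*c)*x3 = 1) := by
  obtain ⟨hc1, hc2⟩ := hc
  set s := Real.sqrt (1 - 2*c) with hs
  have hs2 : s^2 = 1 - 2*c := Real.sq_sqrt (by linarith)
  have hid : x1^3 + (3/2)*(x2^2 + 2*c*x3^2)*x1 + s * ((3/2)*x2^2*x3 + (1 + c)*x3^3) =
      -(1/2)*(x1 + s*x3)^3 + (3/2)*(x1 + s*x3) := by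
    have hx2 : x2^2 = 1 - x1^2 - x3^2 := by linarith
    rw [hx2]
    linear_combination ((3/2)*x1*x3^2 + (1/2)*x3^3*s) * hs2
  have htb : (x1 + s*x3)^2 ≤ 2 - 2*c := by
    nlinarith [sq_nonneg (x1*s - x3), hs2, sq_nonneg x2, sq_nonneg (s*x2), sq_nonneg s]
  have ht2 : x1 + s*x3 > -2 := by nlinarith [htb]
  refine ⟨hid, ?_, ?_⟩
  · rw [hid]; nlinarith [sq_nonneg (x1 + s*x3 - 1), ht2]
  · rw [hid]
    constructor
    · intro h
      by_contra hne
      have h1 : (0:ℝ) < 1 - (x1 + s*x3) ∨ (0:ℝ) < (x1 + s*x3) - 1 := by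
        rcases lt_or_gt_of_ne hne with h' | h'
        · left; linarith
        · right; linarith
      rcases h1 with h' | h'
      · nlinarith [mul_pos h' (show (0:ℝ) < (x1 + s*x3) + 2 by linarith)]
      · nlinarith [mul_pos h' (show (0:ℝ) < (x1 + s*x3) + 2 by linarith)]
    · intro h; rw [h]; ring
end

section
/- With p12(φ) = (a - 1/2) sin^2 φ + 1/2 and p03(φ) = sin φ (d sin^2 φ + 3b cos φ sin φ + 3c cos^2 φ), the inequality 1 - 2 p12(φ)^3 - 3 p12(φ)^2 - p03(φ)^2 ≥ 0 for all φ ∈ [-π, π] (together with p12(φ) ≥ -1 for all φ) holds if and only if both 2×2 matrices √(1-2a)·diag(3, 2(1+a)) ± [[6c, 3b],[3b, 2d]] are positive semidefinite (where necessarily a ≤ 1/2). -/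
lemma psd2 (A B C : ℝ) :
    (!![A, B; B, C] : Matrix (Fin 2) (Fin 2) ℝ).PosSemidef ↔
      ∀ x y : ℝ, 0 ≤ A*x^2 + 2*B*x*y + C*y^2 := by
  constructor
  · intro h x y
    have := h.dotProduct_mulVec_nonneg ![x, y]
    simp [Matrix.mulVec, dotProduct, Fin.sum_univ_two] at this
    nlinarith [this]
  · intro h
    refine Matrix.PosSemidef.of_dotProduct_mulVec_nonneg ?_ ?_
    · ext i j
      fin_cases i <;> fin_cases j <;> simp [Matrix.conjTranspose_apply]
    · intro x
      have := h (x 0) (x 1)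
      simp [Matrix.mulVec, dotProduct, Fin.sum_univ_two]
      nlinarith [this]

set_option maxHeartbeats 1000000 in
open Real in
theorem stmt_14 (a b c d : ℝ)
    (p12 p03 : ℝ → ℝ)
    (h12 : p12 = fun φ => (a - 1/2) * (sin φ)^2 + 1/2)
    (h03 : p03 = fun φ => sin φ * (d * (sin φ)^2 + 3*b*(cos φ)*(sin φ) + 3*c*(cos φ)^2)) :
    ((∀ φ ∈ Set.Icc (-π) π, p12 φ ≥ -1 ∧
        1 - 2*(p12 φ)^3 - 3*(p12 φ)^2 - (p03 φ)^2 ≥ 0)) ↔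
      (a ≤ 1/2 ∧
        (!![Real.sqrt (1 - 2*a) * 3 + 6*c, 3*b;
            3*b, Real.sqrt (1 - 2*a) * (2*(1 + a)) + 2*d] :
          Matrix (Fin 2) (Fin 2) ℝ).PosSemidef ∧
        (!![Real.sqrt (1 - 2*a) * 3 - 6*c, -(3*b);
            -(3*b), Real.sqrt (1 - 2*a) * (2*(1 + a)) - 2*d] :
          Matrix (Fin 2) (Fin 2) ℝ).PosSemidef) := by
  have hr0 : (0:ℝ) ≤ Real.sqrt (1 - 2*a) := Real.sqrt_nonneg _
  rw [psd2, psd2]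
  simp only [h12, h03]
  set r := Real.sqrt (1 - 2*a) with hrdef
  constructor
  · intro h
    have hpi := Real.pi_pos
    have h1 := h (π/2) ⟨by linarith, by linarith⟩
    rw [Real.sin_pi_div_two, Real.cos_pi_div_two] at h1
    obtain ⟨ha1, ha2⟩ := h1
    have ha : a ≤ 1/2 := by nlinarith [sq_nonneg d, sq_nonneg (1+a)]
    have hr2 : r^2 = 1 - 2*a := Real.sq_sqrt (by linarith)
    have key : ∀ x y : ℝ, y ≠ 0 →
        0 ≤ (r*3+6*c)*x^2 + 2*(3*b)*x*y + (r*(2*(1+a))+2*d)*y^2 ∧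
        0 ≤ (r*3-6*c)*x^2 + 2*(-(3*b))*x*y + (r*(2*(1+a))-2*d)*y^2 := by
      intro x y hy
      set z : ℂ := ⟨x, y⟩ with hzdef
      have hz : z ≠ 0 := by
        intro h0
        rw [Complex.ext_iff] at h0
        exact hy h0.2
      have hρ : 0 < ‖z‖ := norm_pos_iff.mpr hz
      set ρ := ‖z‖ with hρdef
      have hcos : Real.cos z.arg = x / ρ := Complex.cos_arg hz
      have hsin : Real.sin z.arg = y / ρ := Complex.sin_arg z
      obtain ⟨hA, hB⟩ := h z.arg ⟨(Complex.neg_pi_lt_arg z).le, Complex.arg_le_pi z⟩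
      rw [hsin] at hA
      rw [hcos, hsin] at hB
      set s := y / ρ with hs
      set t := x / ρ with ht
      have hs0 : s ≠ 0 := div_ne_zero hy hρ.ne'
      have hs2 : 0 < s^2 := by positivity
      have hts : t^2 + s^2 = 1 := by
        have h2 := Real.sin_sq_add_cos_sq z.arg
        rw [hcos, hsin] at h2
        linarith
      have hx : x = ρ * t := by rw [ht]; field_simp [hρ.ne']
      have hy' : y = ρ * s := by rw [hs]; field_simp [hρ.ne']
      set X := r * ((3/2)*t^2 + (1+a)*s^2) with hX
      set q := d*s^2 + 3*b*t*s + 3*c*t^2 with hq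
      clear_value z ρ s t X q
      have hXnn : 0 ≤ X := by
        rw [hX]
        apply mul_nonneg hr0
        nlinarith [hA, hts]
      have hXid : s^2 * X^2 = 1 - 2*((a-1/2)*s^2+1/2)^3 - 3*((a-1/2)*s^2+1/2)^2 := by
        rw [hX]
        linear_combination (s^2*((3/2)*t^2+(1+a)*s^2)^2) * hr2 +
          ((3/2)*(1-2*a)*s^2*(((3/2)*t^2+(1+a)*s^2) + ((a-1/2)*s^2+3/2))) * hts
      have hXq : q^2 ≤ X^2 := by
        have h3 : s^2*q^2 ≤ s^2*X^2 := by nlinarith [hB, hXid]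
        exact le_of_mul_le_mul_left h3 hs2
      have h1 : 0 ≤ X + q := by nlinarith [hXq, hXnn, sq_nonneg (X+q), sq_nonneg (X-q)]
      have h2 : 0 ≤ X - q := by nlinarith [hXq, hXnn, sq_nonneg (X+q), sq_nonneg (X-q)]
      constructor
      · have e : (r*3+6*c)*x^2 + 2*(3*b)*x*y + (r*(2*(1+a))+2*d)*y^2 = 2*ρ^2*(X+q) := by
          rw [hx, hy', hX, hq]; ring
        rw [e]
        exact mul_nonneg (by positivity) h1
      · have e : (r*3-6*c)*x^2 + 2*(-(3*b))*x*y + (r*(2*(1+a))-2*d)*y^2 = 2*ρ^2*(X-q) := by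
          rw [hx, hy', hX, hq]; ring
        rw [e]
        exact mul_nonneg (by positivity) h2
    refine ⟨ha, ?_, ?_⟩
    · intro x y
      rcases eq_or_ne y 0 with hy | hy
      · subst hy
        have hC : 0 ≤ r*(2*(1+a))+2*d := by
          have := (key 0 1 one_ne_zero).1
          nlinarith [this]
        have hAnn : 0 ≤ r*3+6*c := by
          by_contra hneg
          push_neg at hneg
          rcases eq_or_lt_of_le hC with h0 | h0
          · have := (key 1 1 one_ne_zero).1
            have := (key 1 (-1) (by norm_num)).1
            nlinarith
          · set ε := Real.sqrt (-(r*3+6*c) / (2*(r*(2*(1+a))+2*d))) with hε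
            have hεpos : 0 < ε := Real.sqrt_pos.mpr (div_pos (by linarith) (by linarith))
            have hε2 : ε^2 = -(r*3+6*c) / (2*(r*(2*(1+a))+2*d)) :=
              Real.sq_sqrt (le_of_lt (div_pos (by linarith) (by linarith)))
            have k1 := (key 1 ε hεpos.ne').1
            have k2 := (key 1 (-ε) (by linarith)).1
            have : (r*(2*(1+a))+2*d) * ε^2 = -(r*3+6*c)/2 := by
              rw [hε2, mul_div_assoc', div_eq_iff (ne_of_gt (by linarith))]; ring
            nlinarith [k1, k2]
        nlinarith [hAnn, sq_nonneg x]
      · exact (key x y hy).1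
    · intro x y
      rcases eq_or_ne y 0 with hy | hy
      · subst hy
        have hC : 0 ≤ r*(2*(1+a))-2*d := by
          have := (key 0 1 one_ne_zero).2
          nlinarith [this]
        have hAnn : 0 ≤ r*3-6*c := by
          by_contra hneg
          push_neg at hneg
          rcases eq_or_lt_of_le hC with h0 | h0
          · have := (key 1 1 one_ne_zero).2
            have := (key 1 (-1) (by norm_num)).2
            nlinarith
          · set ε := Real.sqrt (-(r*3-6*c) / (2*(r*(2*(1+a))-2*d))) with hε
            have hεpos : 0 < ε := Real.sqrt_pos.mpr (div_pos (by linarith) (by linarith))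
            have hε2 : ε^2 = -(r*3-6*c) / (2*(r*(2*(1+a))-2*d)) :=
              Real.sq_sqrt (le_of_lt (div_pos (by linarith) (by linarith)))
            have k1 := (key 1 ε hεpos.ne').2
            have k2 := (key 1 (-ε) (by linarith)).2
            have : (r*(2*(1+a))-2*d) * ε^2 = -(r*3-6*c)/2 := by
              rw [hε2, mul_div_assoc', div_eq_iff (ne_of_gt (by linarith))]; ring
            nlinarith [k1, k2]
        nlinarith [hAnn, sq_nonneg x]
      · exact (key x y hy).2
  · rintro ⟨ha, hP, hQ⟩
    have hr2 : r^2 = 1 - 2*a := Real.sq_sqrt (by linarith)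
    have hC1 := hP 0 1
    have hC2 := hQ 0 1
    have h1a : 0 ≤ 1 + a := by
      rcases eq_or_lt_of_le hr0 with h0 | h0
      · nlinarith [hr2]
      · nlinarith [hC1, hC2]
    intro φ hφ
    set s := Real.sin φ with hsd
    set t := Real.cos φ with htd
    have hts : s^2 + t^2 = 1 := Real.sin_sq_add_cos_sq φ
    have hA := hP t s
    have hB := hQ t s
    constructor
    · nlinarith [hts, sq_nonneg s, sq_nonneg t, mul_nonneg h1a (sq_nonneg s)]
    · have E : 1 - 2*((a-1/2)*s^2+1/2)^3 - 3*((a-1/2)*s^2+1/2)^2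
            - (s*(d*s^2+3*b*t*s+3*c*t^2))^2
          = s^2/4 * (((r*3+6*c)*t^2 + 2*(3*b)*t*s + (r*(2*(1+a))+2*d)*s^2)
              * ((r*3-6*c)*t^2 + 2*(-(3*b))*t*s + (r*(2*(1+a))-2*d)*s^2)) := by
        linear_combination (-(s^2*((3/2)*t^2+(1+a)*s^2)^2)) * hr2 +
          (-((3/2)*(1-2*a)*s^2*(((3/2)*t^2+(1+a)*s^2) + ((a-1/2)*s^2+3/2)))) * hts
      have := mul_nonneg (mul_nonneg (by positivity : (0:ℝ) ≤ s^2/4) hA) hB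
      nlinarith [E, this]
end

section
/- Let b ∈ ℝ^4 satisfy b_i > 0 and b1+b2+b3+b4 = 1, and let Γ be the 4×4 symmetric matrix with Γ_ii = 1 and Γ_ij = -1/2 + (3/2)·1/((b_i^{-1}-1)(b_j^{-1}-1)) for i ≠ j. Then all off-diagonal entries of Γ lie in the open interval (-1/2, 1), the matrix Γ is positive semidefinite, and its determinant is zero (so Γ has rank 3). -/
set_option maxHeartbeats 2000000

private lemma det4 {R : Type*} [CommRing R] (A : Matrix (Fin 4) (Fin 4) R) :
    A.det =
       A 0 0 * A 1 1 * A 2 2 * A 3 3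
        - A 0 0 * A 1 1 * A 2 3 * A 3 2
        - A 0 0 * A 1 2 * A 2 1 * A 3 3
        + A 0 0 * A 1 2 * A 2 3 * A 3 1
        + A 0 0 * A 1 3 * A 2 1 * A 3 2
        - A 0 0 * A 1 3 * A 2 2 * A 3 1
        - A 0 1 * A 1 0 * A 2 2 * A 3 3
        + A 0 1 * A 1 0 * A 2 3 * A 3 2
        + A 0 1 * A 1 2 * A 2 0 * A 3 3
        - A 0 1 * A 1 2 * A 2 3 * A 3 0
        - A 0 1 * A 1 3 * A 2 0 * A 3 2
        + A 0 1 * A 1 3 * A 2 2 * A 3 0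
        + A 0 2 * A 1 0 * A 2 1 * A 3 3
        - A 0 2 * A 1 0 * A 2 3 * A 3 1
        - A 0 2 * A 1 1 * A 2 0 * A 3 3
        + A 0 2 * A 1 1 * A 2 3 * A 3 0
        + A 0 2 * A 1 3 * A 2 0 * A 3 1
        - A 0 2 * A 1 3 * A 2 1 * A 3 0
        - A 0 3 * A 1 0 * A 2 1 * A 3 2
        + A 0 3 * A 1 0 * A 2 2 * A 3 1
        + A 0 3 * A 1 1 * A 2 0 * A 3 2
        - A 0 3 * A 1 1 * A 2 2 * A 3 0
        - A 0 3 * A 1 2 * A 2 0 * A 3 1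
        + A 0 3 * A 1 2 * A 2 1 * A 3 0 := by
  simp only [Matrix.det_succ_row_zero, Matrix.submatrix_apply, Matrix.submatrix_submatrix,
    Function.comp_apply, Fin.sum_univ_succ, Matrix.det_unique, Fin.default_eq_zero,
    Finset.univ_unique, Finset.sum_singleton, Fin.val_zero, Fin.val_succ, Fin.val_eq_zero,
    Fin.zero_succAbove, Fin.succ_zero_eq_one, Fin.succ_one_eq_two, Fin.succ_succAbove_zero,
    Fin.succ_succAbove_one, ← Nat.not_even_iff_odd, Even.add_self,
    show Fin.succ (2 : Fin 3) = 3 by decide,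
    show Fin.succAbove (2 : Fin 4) 2 = 3 by decide,
    show Fin.succAbove (1 : Fin 4) 2 = 3 by decide,
    show Fin.succAbove (3 : Fin 4) 2 = 2 by decide]
  ring

private lemma aux_pair (p q : ℝ) (hp : 0 < p) (hq : 0 < q) (hpq : p + q < 1) :
    (-1/2 : ℝ) < -1/2 + 3/2 * (p / (1 - p) * (q / (1 - q))) ∧
    -1/2 + 3/2 * (p / (1 - p) * (q / (1 - q))) < 1 := by
  have h1 : 0 < 1 - p := by linarith
  have h2 : 0 < 1 - q := by linarith
  have hd : 0 < p / (1 - p) * (q / (1 - q)) := by positivity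
  constructor
  · linarith
  · have hlt : p / (1 - p) * (q / (1 - q)) < 1 := by
      rw [div_mul_div_comm, div_lt_one (mul_pos h1 h2)]
      nlinarith
    linarith

private lemma aux_D3 (c1 c2 c3 : ℝ) (h1 : 0 < c1) (h2 : 0 < c2) (h3 : 0 < c3)
    (h : c1*c2 + c1*c3 + c2*c3 + 2*(c1*c2*c3) < 1) :
    0 < 1 - (-1/2 + 3/2*(c1*c2))^2 - (-1/2 + 3/2*(c1*c3))^2 - (-1/2 + 3/2*(c2*c3))^2
      + 2*((-1/2 + 3/2*(c1*c2))*(-1/2 + 3/2*(c1*c3))*(-1/2 + 3/2*(c2*c3))) := by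
  have he2 : 0 < c1*c2 + c1*c3 + c2*c3 := by positivity
  have he3 : 0 < c1*c2*c3 := by positivity
  have h4 : 0 < 1 - (c1*c2 + c1*c3 + c2*c3) := by nlinarith
  nlinarith [mul_pos he2 h4, mul_pos (show (0:ℝ) < c1 + c2 + c3 by linarith) he3,
    sq_nonneg (c1*c2*c3)]

private lemma aux_psd (a12 a13 a14 a23 a24 a34 x1 x2 x3 x4 : ℝ)
    (hD2 : a12^2 < 1)
    (hD3 : 0 < 1 - a12^2 - a13^2 - a23^2 + 2*(a12*a13*a23))
    (hdet : 1 - a12^2 - a13^2 - a14^2 - a23^2 - a24^2 - a34^2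
      + a12^2*a34^2 + a13^2*a24^2 + a14^2*a23^2
      + 2*(a12*a13*a23 + a12*a14*a24 + a13*a14*a34 + a23*a24*a34)
      - 2*(a12*a13*a24*a34 + a12*a14*a23*a34 + a13*a14*a23*a24) = 0) :
    0 ≤ x1^2 + x2^2 + x3^2 + x4^2
      + 2*(a12*(x1*x2) + a13*(x1*x3) + a14*(x1*x4) + a23*(x2*x3) + a24*(x2*x4)
          + a34*(x3*x4)) := by
  have hD2' : 0 < 1 - a12^2 := by linarith
  have hM1 := sq_nonneg (x1 + a12*x2 + a13*x3 + a14*x4)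
  have hM2 := sq_nonneg ((1 - a12^2)*x2 + (a23 - a12*a13)*x3 + (a24 - a12*a14)*x4)
  have hN3 := sq_nonneg (((1 - a12^2)*(1 - a13^2) - (a23 - a12*a13)^2)*x3
      + ((1 - a12^2)*(a34 - a13*a14) - (a23 - a12*a13)*(a24 - a12*a14))*x4)
  have key : (1 - a12^2) * (1 - a12^2 - a13^2 - a23^2 + 2*(a12*a13*a23)) *
        (x1^2 + x2^2 + x3^2 + x4^2
          + 2*(a12*(x1*x2) + a13*(x1*x3) + a14*(x1*x4) + a23*(x2*x3) + a24*(x2*x4)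
              + a34*(x3*x4)))
      = (1 - a12^2) * (1 - a12^2 - a13^2 - a23^2 + 2*(a12*a13*a23)) *
          (x1 + a12*x2 + a13*x3 + a14*x4)^2
        + (1 - a12^2 - a13^2 - a23^2 + 2*(a12*a13*a23)) *
          ((1 - a12^2)*x2 + (a23 - a12*a13)*x3 + (a24 - a12*a14)*x4)^2
        + (((1 - a12^2)*(1 - a13^2) - (a23 - a12*a13)^2)*x3
          + ((1 - a12^2)*(a34 - a13*a14) - (a23 - a12*a13)*(a24 - a12*a14))*x4)^2
        + (1 - a12^2) * (1 - a12^2 - a13^2 - a14^2 - a23^2 - a24^2 - a34^2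
          + a12^2*a34^2 + a13^2*a24^2 + a14^2*a23^2
          + 2*(a12*a13*a23 + a12*a14*a24 + a13*a14*a34 + a23*a24*a34)
          - 2*(a12*a13*a24*a34 + a12*a14*a23*a34 + a13*a14*a23*a24)) * x4^2 := by
    ring
  rw [hdet, mul_zero, zero_mul, add_zero] at key
  have hP : 0 < (1 - a12^2) * (1 - a12^2 - a13^2 - a23^2 + 2*(a12*a13*a23)) :=
    mul_pos hD2' hD3
  refine le_of_mul_le_mul_left ?_ hP
  rw [mul_zero, key]
  exact add_nonneg (add_nonneg (mul_nonneg hP.le hM1)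
    (mul_nonneg hD3.le hM2)) hN3

theorem stmt_16 (b : Fin 4 → ℝ) (hb : ∀ i, 0 < b i) (hsum : ∑ i, b i = 1)
    (Γ : Matrix (Fin 4) (Fin 4) ℝ)
    (hΓ : Γ = fun i j => if i = j then 1 else
      -1/2 + (3/2) * (((b i)⁻¹ - 1) * ((b j)⁻¹ - 1))⁻¹) :
    (∀ i j, i ≠ j → Γ i j ∈ Set.Ioo (-1/2 : ℝ) 1) ∧ Γ.PosSemidef ∧ Γ.det = 0 := by
  subst hΓ
  have hsum4 : b 0 + b 1 + b 2 + b 3 = 1 := by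
    rw [Fin.sum_univ_four] at hsum; linarith
  have hex : ∀ i j : Fin 4, ∃ k : Fin 4, k ≠ i ∧ k ≠ j := by decide
  -- any two coordinates sum to less than 1
  have hpair : ∀ i j : Fin 4, i ≠ j → b i + b j < 1 := by
    intro i j hij
    obtain ⟨k, hki, hkj⟩ := hex i j
    have hsum3 : ∑ m ∈ ({i, j, k} : Finset (Fin 4)), b m ≤ 1 := by
      rw [← hsum]
      exact Finset.sum_le_sum_of_subset_of_nonneg (Finset.subset_univ _)
        (fun m _ _ => (hb m).le)
    have h3 : b i + b j + b k ≤ 1 := by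
      rwa [Finset.sum_insert (by simp [hij, (Ne.symm hki)]),
        Finset.sum_insert (by simp [Ne.symm hkj]), Finset.sum_singleton,
        ← add_assoc] at hsum3
    linarith [hb k]
  have hlt1 : ∀ i, b i < 1 := by
    intro i
    obtain ⟨k, hki, _⟩ := hex i i
    have := hpair i k (Ne.symm hki)
    linarith [hb k]
  have hb0 : ∀ i, b i ≠ 0 := fun i => (hb i).ne'
  have hb1 : ∀ i, (1 : ℝ) - b i ≠ 0 := fun i => by have := hlt1 i; intro h; linarith [sub_eq_zero.mp h]
  have hx : ∀ i : Fin 4, (b i)⁻¹ - 1 = (1 - b i) / b i := by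
    intro i; rw [sub_div, div_self (hb0 i), one_div]
  have hprod : ∀ i j : Fin 4,
      (((b i)⁻¹ - 1) * ((b j)⁻¹ - 1))⁻¹ = b i / (1 - b i) * (b j / (1 - b j)) := by
    intro i j
    rw [hx i, hx j, div_mul_div_comm, inv_div, div_mul_div_comm]
  have h10 : 0 < 1 - b 0 := by linarith [hlt1 0]
  have h11 : 0 < 1 - b 1 := by linarith [hlt1 1]
  have h12 : 0 < 1 - b 2 := by linarith [hlt1 2]
  have h13 : 0 < 1 - b 3 := by linarith [hlt1 3]
  have hb3 : b 3 = 1 - b 0 - b 1 - b 2 := by linarith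
  have hkey : (b 0/(1 - b 0) * (b 1/(1 - b 1)) + b 0/(1 - b 0) * (b 2/(1 - b 2)) + b 0/(1 - b 0) * (b 3/(1 - b 3)) + b 1/(1 - b 1) * (b 2/(1 - b 2)) + b 1/(1 - b 1) * (b 3/(1 - b 3)) + b 2/(1 - b 2) * (b 3/(1 - b 3))) + 2*(b 0/(1 - b 0) * (b 1/(1 - b 1)) * (b 2/(1 - b 2)) + b 0/(1 - b 0) * (b 1/(1 - b 1)) * (b 3/(1 - b 3)) + b 0/(1 - b 0) * (b 2/(1 - b 2)) * (b 3/(1 - b 3)) + b 1/(1 - b 1) * (b 2/(1 - b 2)) * (b 3/(1 - b 3))) + 3*(b 0/(1 - b 0) * (b 1/(1 - b 1)) * (b 2/(1 - b 2)) * (b 3/(1 - b 3))) = 1 := by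
    have hrel0 : b 0 / (1 - b 0) * (1 - b 0) = b 0 := div_mul_cancel₀ (b 0) (hb1 0)
    have hrel1 : b 1 / (1 - b 1) * (1 - b 1) = b 1 := div_mul_cancel₀ (b 1) (hb1 1)
    have hrel2 : b 2 / (1 - b 2) * (1 - b 2) = b 2 := div_mul_cancel₀ (b 2) (hb1 2)
    have hrel3 : b 3 / (1 - b 3) * (1 - b 3) = b 3 := div_mul_cancel₀ (b 3) (hb1 3)
    linear_combination ((1 + b 0/(1 - b 0))*(1 + b 1/(1 - b 1))*(1 + b 2/(1 - b 2))*(1 + b 3/(1 - b 3))) * hsum4 + ((1 + b 1/(1 - b 1))*(1 + b 2/(1 - b 2))*(1 + b 3/(1 - b 3))) * hrel0 + ((1 + b 0/(1 - b 0))*(1 + b 2/(1 - b 2))*(1 + b 3/(1 - b 3))) * hrel1 + ((1 + b 0/(1 - b 0))*(1 + b 1/(1 - b 1))*(1 + b 3/(1 - b 3))) * hrel2 + ((1 + b 0/(1 - b 0))*(1 + b 1/(1 - b 1))*(1 + b 2/(1 - b 2))) * hrel3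
  -- the determinant polynomial identity
  have hD4 : 1 - (-1/2 + 3/2*(b 0/(1 - b 0) * (b 1/(1 - b 1))))^2
      - (-1/2 + 3/2*(b 0/(1 - b 0) * (b 2/(1 - b 2))))^2
      - (-1/2 + 3/2*(b 0/(1 - b 0) * (b 3/(1 - b 3))))^2
      - (-1/2 + 3/2*(b 1/(1 - b 1) * (b 2/(1 - b 2))))^2
      - (-1/2 + 3/2*(b 1/(1 - b 1) * (b 3/(1 - b 3))))^2
      - (-1/2 + 3/2*(b 2/(1 - b 2) * (b 3/(1 - b 3))))^2
      + (-1/2 + 3/2*(b 0/(1 - b 0) * (b 1/(1 - b 1))))^2 * (-1/2 + 3/2*(b 2/(1 - b 2) * (b 3/(1 - b 3))))^2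
      + (-1/2 + 3/2*(b 0/(1 - b 0) * (b 2/(1 - b 2))))^2 * (-1/2 + 3/2*(b 1/(1 - b 1) * (b 3/(1 - b 3))))^2
      + (-1/2 + 3/2*(b 0/(1 - b 0) * (b 3/(1 - b 3))))^2 * (-1/2 + 3/2*(b 1/(1 - b 1) * (b 2/(1 - b 2))))^2
      + 2*((-1/2 + 3/2*(b 0/(1 - b 0) * (b 1/(1 - b 1)))) * (-1/2 + 3/2*(b 0/(1 - b 0) * (b 2/(1 - b 2)))) * (-1/2 + 3/2*(b 1/(1 - b 1) * (b 2/(1 - b 2))))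
        + (-1/2 + 3/2*(b 0/(1 - b 0) * (b 1/(1 - b 1)))) * (-1/2 + 3/2*(b 0/(1 - b 0) * (b 3/(1 - b 3)))) * (-1/2 + 3/2*(b 1/(1 - b 1) * (b 3/(1 - b 3))))
        + (-1/2 + 3/2*(b 0/(1 - b 0) * (b 2/(1 - b 2)))) * (-1/2 + 3/2*(b 0/(1 - b 0) * (b 3/(1 - b 3)))) * (-1/2 + 3/2*(b 2/(1 - b 2) * (b 3/(1 - b 3))))
        + (-1/2 + 3/2*(b 1/(1 - b 1) * (b 2/(1 - b 2)))) * (-1/2 + 3/2*(b 1/(1 - b 1) * (b 3/(1 - b 3)))) * (-1/2 + 3/2*(b 2/(1 - b 2) * (b 3/(1 - b 3)))))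
      - 2*((-1/2 + 3/2*(b 0/(1 - b 0) * (b 1/(1 - b 1)))) * (-1/2 + 3/2*(b 0/(1 - b 0) * (b 2/(1 - b 2)))) * (-1/2 + 3/2*(b 1/(1 - b 1) * (b 3/(1 - b 3)))) * (-1/2 + 3/2*(b 2/(1 - b 2) * (b 3/(1 - b 3))))
        + (-1/2 + 3/2*(b 0/(1 - b 0) * (b 1/(1 - b 1)))) * (-1/2 + 3/2*(b 0/(1 - b 0) * (b 3/(1 - b 3)))) * (-1/2 + 3/2*(b 1/(1 - b 1) * (b 2/(1 - b 2)))) * (-1/2 + 3/2*(b 2/(1 - b 2) * (b 3/(1 - b 3))))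
        + (-1/2 + 3/2*(b 0/(1 - b 0) * (b 2/(1 - b 2)))) * (-1/2 + 3/2*(b 0/(1 - b 0) * (b 3/(1 - b 3)))) * (-1/2 + 3/2*(b 1/(1 - b 1) * (b 2/(1 - b 2)))) * (-1/2 + 3/2*(b 1/(1 - b 1) * (b 3/(1 - b 3)))))
      = 0 := by
    linear_combination (27/16 * (1 - ((b 0/(1 - b 0) * (b 1/(1 - b 1)) + b 0/(1 - b 0) * (b 2/(1 - b 2)) + b 0/(1 - b 0) * (b 3/(1 - b 3)) + b 1/(1 - b 1) * (b 2/(1 - b 2)) + b 1/(1 - b 1) * (b 3/(1 - b 3)) + b 2/(1 - b 2) * (b 3/(1 - b 3)))) + 2*((b 0/(1 - b 0) * (b 1/(1 - b 1)) * (b 2/(1 - b 2)) + b 0/(1 - b 0) * (b 1/(1 - b 1)) * (b 3/(1 - b 3)) + b 0/(1 - b 0) * (b 2/(1 - b 2)) * (b 3/(1 - b 3)) + b 1/(1 - b 1) * (b 2/(1 - b 2)) * (b 3/(1 - b 3)))) - 3*((b 0/(1 - b 0) * (b 1/(1 - b 1)) * (b 2/(1 - b 2)) * (b 3/(1 - b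 3)))))) * hkey
  have ef1 : ((0:Fin 4) = 3) ↔ False := by decide
  have ef2 : ((1:Fin 4) = 3) ↔ False := by decide
  have ef3 : ((2:Fin 4) = 3) ↔ False := by decide
  have ef4 : ((3:Fin 4) = 0) ↔ False := by decide
  have ef5 : ((3:Fin 4) = 1) ↔ False := by decide
  have ef6 : ((3:Fin 4) = 2) ↔ False := by decide
  refine ⟨?_, ⟨?_, ?_⟩, ?_⟩
  · -- entries in the open interval
    intro i j hne
    have h := aux_pair (b i) (b j) (hb i) (hb j) (hpair i j hne)
    have heq : (fun i j => if i = j then (1:ℝ) else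
        -1/2 + (3/2) * (((b i)⁻¹ - 1) * ((b j)⁻¹ - 1))⁻¹) i j
        = -1/2 + 3/2 * (b i / (1 - b i) * (b j / (1 - b j))) := by
      simp only [if_neg hne, hprod i j]
    rw [heq]
    exact Set.mem_Ioo.mpr ⟨h.1, h.2⟩
  · -- Hermitian
    ext i j
    change star ((fun i j => if i = j then (1:ℝ) else
      -1/2 + (3/2) * (((b i)⁻¹ - 1) * ((b j)⁻¹ - 1))⁻¹) j i) = _
    simp only [star_trivial]
    by_cases h : i = j
    · subst h; rfl
    · simp only [if_neg h, if_neg (Ne.symm h)]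
      rw [mul_comm ((b j)⁻¹ - 1)]
  · -- quadratic form nonneg
    intro x
    have hP01 : b 0 / (1 - b 0) * (b 1 / (1 - b 1)) < 1 := by
      rw [div_mul_div_comm, div_lt_one (mul_pos h10 h11)]
      nlinarith [hpair 0 1 (by decide)]
    have hP01' : 0 < b 0 / (1 - b 0) * (b 1 / (1 - b 1)) :=
      mul_pos (div_pos (hb 0) h10) (div_pos (hb 1) h11)
    have hD2 : (-1/2 + 3/2*(b 0/(1 - b 0) * (b 1/(1 - b 1))))^2 < 1 := by nlinarith
    have h123 : b 0/(1 - b 0) * (b 1/(1 - b 1)) + b 0/(1 - b 0) * (b 2/(1 - b 2))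
        + b 1/(1 - b 1) * (b 2/(1 - b 2))
        + 2*(b 0/(1 - b 0) * (b 1/(1 - b 1)) * (b 2/(1 - b 2))) < 1 := by
      have key : 1 - (b 0/(1 - b 0) * (b 1/(1 - b 1)) + b 0/(1 - b 0) * (b 2/(1 - b 2))
          + b 1/(1 - b 1) * (b 2/(1 - b 2))
          + 2*(b 0/(1 - b 0) * (b 1/(1 - b 1)) * (b 2/(1 - b 2)))) =
          (1 - b 0 - b 1 - b 2) / ((1 - b 0) * (1 - b 1) * (1 - b 2)) := by
        field_simp
        ring
      have pos : 0 < (1 - b 0 - b 1 - b 2) / ((1 - b 0) * (1 - b 1) * (1 - b 2)) := by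
        exact div_pos (by linarith [hb 3]) (mul_pos (mul_pos h10 h11) h12)
      linarith
    have hD3 := aux_D3 (b 0/(1 - b 0)) (b 1/(1 - b 1)) (b 2/(1 - b 2))
      (div_pos (hb 0) h10) (div_pos (hb 1) h11) (div_pos (hb 2) h12) h123
    have hQ := aux_psd (-1/2 + 3/2*(b 0/(1 - b 0) * (b 1/(1 - b 1))))
      (-1/2 + 3/2*(b 0/(1 - b 0) * (b 2/(1 - b 2))))
      (-1/2 + 3/2*(b 0/(1 - b 0) * (b 3/(1 - b 3))))
      (-1/2 + 3/2*(b 1/(1 - b 1) * (b 2/(1 - b 2))))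
      (-1/2 + 3/2*(b 1/(1 - b 1) * (b 3/(1 - b 3))))
      (-1/2 + 3/2*(b 2/(1 - b 2) * (b 3/(1 - b 3))))
      (x 0) (x 1) (x 2) (x 3) hD2 hD3 hD4
    simp (disch := simp) only [Finsupp.sum_fintype]
    simp only [dotProduct, Matrix.mulVec, Fin.sum_univ_four, Pi.star_apply,
      star_trivial, hprod]
    norm_num [Fin.ext_iff, Fin.val_natCast, ef1, ef2, ef3, ef4, ef5, ef6]
    linarith [hQ]
  · -- determinant
    refine (det4 _).trans ?_
    norm_num [Fin.ext_iff, Fin.val_natCast, ef1, ef2, ef3, ef4, ef5, ef6, hprod]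
    linear_combination hD4
end
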